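/- arXiv:2205.14502 — 2 statements merged into one kernel-verified Lean document; each statement's English description precedes it below -/
import Mathlib

section
/- Let X be a continuum, μ : C(X) → [0, μ(X)] a Whitney map, and t ∈ (0, μ(X)). For any two distinct elements A, B ∈ μ⁻¹(t) with A ∩ B ≠ ∅, there exists an arc 𝓘 ⊆ μ⁻¹(t) from A to B such that L ⊆ A ∪ B for every L ∈ 𝓘; moreover, for any given connected component K of A ∩ B, the arc 𝓘 may be chosen so that in addition K ⊆ L for every L ∈ 𝓘. -/
open TopologicalSpace

/-- The hyperspace `C(X)` of all subcontinua of `X`, i.e. nonempty compact connected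
subsets, with the Hausdorff metric. -/
abbrev Hyperspace (X : Type*) [MetricSpace X] : Type _ :=
  {K : NonemptyCompacts X // IsConnected (K : Set X)}

namespace WhitneyArcAux

open Set Metric Filter Topology

section Aux
variable {α : Type*} [MetricSpace α]




lemma hd_fin {s t : Set α} (hs : s.Nonempty) (ht : t.Nonempty)
    (hbs : Bornology.IsBounded s) (hbt : Bornology.IsBounded t) :
    EMetric.hausdorffEdist s t ≠ ⊤ :=
  Metric.hausdorffEdist_ne_top_of_nonempty_of_bounded hs ht hbs hbt

/-- nested sets: the Hausdorff distance to the small one is monotone. -/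
lemma hausdorffDist_le_of_nested {s t u : Set α} (h1 : s ⊆ t) (h2 : t ⊆ u)
    (hs : s.Nonempty) (hbu : Bornology.IsBounded u) :
    hausdorffDist t s ≤ hausdorffDist u s := by
  have hfin : EMetric.hausdorffEdist u s ≠ ⊤ :=
    hd_fin (hs.mono (h1.trans h2)) hs hbu (hbu.subset (h1.trans h2))
  refine hausdorffDist_le_of_infDist hausdorffDist_nonneg (fun x hx => ?_) (fun x hx => ?_)
  · exact (infDist_le_hausdorffDist_of_mem (h2 hx) hfin)
  · rw [infDist_zero_of_mem (h1 hx)]; exact hausdorffDist_nonneg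


lemma hausdorffDist_le_of_nested' {s t u : Set α} (h1 : s ⊆ t) (h2 : t ⊆ u)
    (hs : s.Nonempty) (hbu : Bornology.IsBounded u) :
    hausdorffDist u t ≤ hausdorffDist u s := by
  have hfin : EMetric.hausdorffEdist u s ≠ ⊤ :=
    hd_fin (hs.mono (h1.trans h2)) hs hbu (hbu.subset (h1.trans h2))
  refine hausdorffDist_le_of_infDist hausdorffDist_nonneg (fun x hx => ?_) (fun x hx => ?_)
  · exact le_trans (infDist_le_infDist_of_subset h1 hs) (infDist_le_hausdorffDist_of_mem hx hfin)
  · rw [infDist_zero_of_mem (h2 hx)]; exact hausdorffDist_nonneg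

lemma exists_hausdorffDist_iInter_lt {K : ℕ → Set α} (hK : ∀ n, IsCompact (K n))
    (hanti : ∀ m n, m ≤ n → K n ⊆ K m) (hne : ∀ n, (K n).Nonempty) {ε : ℝ} (hε : 0 < ε) :
    ∃ n, hausdorffDist (K n) (⋂ m, K m) < ε := by
  set T := ⋂ m, K m with hT
  have hTsub : ∀ n, T ⊆ K n := fun n => iInter_subset _ _
  have hthick : ∃ n, K n ⊆ thickening (ε/2) T := by
    by_contra h
    push_neg at h
    have hSne : ∀ n, (K n \ thickening (ε/2) T).Nonempty := by
      intro n
      rcases not_subset.1 (h n) with ⟨x, hx1, hx2⟩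
      exact ⟨x, hx1, hx2⟩
    have := IsCompact.nonempty_iInter_of_sequence_nonempty_isCompact_isClosed
      (fun n => K n \ thickening (ε/2) T)
      (fun n => diff_subset_diff_left (hanti n (n+1) (Nat.le_succ n)))
      hSne ((hK 0).diff isOpen_thickening)
      (fun n => (hK n).isClosed.sdiff isOpen_thickening)
    rcases this with ⟨x, hx⟩
    simp only [mem_iInter, mem_diff] at hx
    have hxT : x ∈ T := mem_iInter.2 fun n => (hx n).1
    exact (hx 0).2 (self_subset_thickening (by linarith) T hxT)
  rcases hthick with ⟨n, hn⟩
  refine ⟨n, lt_of_le_of_lt (hausdorffDist_le_of_infDist (show (0:ℝ) ≤ ε/2 by linarith)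
    (fun x hx => ?_) (fun x hx => ?_)) (show ε/2 < ε by linarith)⟩
  · rcases mem_thickening_iff.1 (hn hx) with ⟨z, hz, hdz⟩
    exact le_trans (infDist_le_dist_of_mem hz) hdz.le
  · rw [infDist_zero_of_mem (hTsub n hx)]; linarith

lemma exists_hausdorffDist_closure_iUnion_lt {K : ℕ → Set α}
    (hmono : ∀ m n, m ≤ n → K m ⊆ K n) (hne : (K 0).Nonempty)
    (hcl : IsCompact (closure (⋃ m, K m))) {ε : ℝ} (hε : 0 < ε) :
    ∃ n, hausdorffDist (K n) (closure (⋃ m, K m)) < ε := by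
  set T := closure (⋃ m, K m) with hT
  have hsubT : ∀ n, K n ⊆ T := fun n => (subset_iUnion K n).trans subset_closure
  -- cover T by balls centered at points of ⋃ K m
  have hcov : T ⊆ ⋃ y : (⋃ m, K m), ball (y : α) (ε/2) := by
    intro x hx
    rcases Metric.mem_closure_iff.1 hx (ε/2) (by linarith) with ⟨y, hy, hxy⟩
    exact mem_iUnion.2 ⟨⟨y, hy⟩, by simpa [mem_ball, dist_comm] using hxy⟩
  rcases hcl.elim_finite_subcover _ (fun _ => isOpen_ball) hcov with ⟨F, hF⟩
  -- index for each y in F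
  have hidx : ∀ y : (⋃ m, K m), ∃ n, (y : α) ∈ K n := fun y => mem_iUnion.1 y.2
  classical
  set g : (⋃ m, K m) → ℕ := fun y => (hidx y).choose with hg
  have hgmem : ∀ y, (y : α) ∈ K (g y) := fun y => (hidx y).choose_spec
  set n := F.sup g with hn
  refine ⟨n, lt_of_le_of_lt (hausdorffDist_le_of_infDist (show (0:ℝ) ≤ ε/2 by linarith)
    (fun x hx => ?_) (fun x hx => ?_)) (show ε/2 < ε by linarith)⟩
  · rw [infDist_zero_of_mem (hsubT n hx)]; linarith
  · rcases mem_iUnion₂.1 (hF hx) with ⟨y, hyF, hxy⟩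
    have hyn : (y : α) ∈ K n := hmono _ _ (Finset.le_sup hyF) (hgmem y)
    exact le_trans (infDist_le_dist_of_mem hyn) (le_of_lt (by simpa [dist_comm] using mem_ball.1 hxy))

lemma isPreconnected_iInter_of_antitone {K : ℕ → Set α} (hK : ∀ n, IsCompact (K n))
    (hc : ∀ n, IsPreconnected (K n)) (hanti : ∀ m n, m ≤ n → K n ⊆ K m)
    (hne : ∀ n, (K n).Nonempty) : IsPreconnected (⋂ n, K n) := by
  set T := ⋂ n, K n with hT
  have hTcl : IsClosed T := isClosed_iInter fun n => (hK n).isClosed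
  have hTcp : IsCompact T := (hK 0).of_isClosed_subset hTcl (iInter_subset _ _)
  rw [isPreconnected_closed_iff]
  intro F1 F2 h1 h2 hcov hne1 hne2
  by_contra hdisj
  rw [not_nonempty_iff_eq_empty] at hdisj
  have hC1 : IsCompact (T ∩ F1) := hTcp.inter_right h1
  have hC2 : IsCompact (T ∩ F2) := hTcp.inter_right h2
  have hdisj' : Disjoint (T ∩ F1) (T ∩ F2) := by
    rw [disjoint_iff_inter_eq_empty]
    rw [← hdisj]; ext x; constructor
    · rintro ⟨⟨hx1, hx2⟩, ⟨_, hx3⟩⟩; exact ⟨hx1, hx2, hx3⟩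
    · rintro ⟨hx1, hx2, hx3⟩; exact ⟨⟨hx1, hx2⟩, hx1, hx3⟩
  obtain ⟨U, V, hU, hV, hsubU, hsubV, hUV⟩ :=
    SeparatedNhds.of_isCompact_isCompact_isClosed hC1 hC2 (hTcl.inter h2) hdisj'
  -- some K n is inside U ∪ V
  have hKn : ∃ n, K n ⊆ U ∪ V := by
    by_contra h
    push_neg at h
    have hSne : ∀ n, (K n \ (U ∪ V)).Nonempty := by
      intro n; rcases not_subset.1 (h n) with ⟨x, hx1, hx2⟩; exact ⟨x, hx1, hx2⟩
    have := IsCompact.nonempty_iInter_of_sequence_nonempty_isCompact_isClosed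
      (fun n => K n \ (U ∪ V))
      (fun n => diff_subset_diff_left (hanti n (n+1) (Nat.le_succ n)))
      hSne ((hK 0).diff (hU.union hV))
      (fun n => (hK n).isClosed.sdiff (hU.union hV))
    rcases this with ⟨x, hx⟩
    simp only [mem_iInter, mem_diff] at hx
    have hxT : x ∈ T := mem_iInter.2 fun n => (hx n).1
    rcases hcov hxT with h | h
    · exact (hx 0).2 (Or.inl (hsubU ⟨hxT, h⟩))
    · exact (hx 0).2 (Or.inr (hsubV ⟨hxT, h⟩))
  rcases hKn with ⟨n, hn⟩
  have hneU : (K n ∩ U).Nonempty := hne1.mono fun x hx =>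
    ⟨(iInter_subset K n) hx.1, hsubU hx⟩
  have hneV : (K n ∩ V).Nonempty := hne2.mono fun x hx =>
    ⟨(iInter_subset K n) hx.1, hsubV hx⟩
  rcases hc n U V hU hV hn hneU hneV with ⟨x, _, hxU, hxV⟩
  exact (hUV.ne_of_mem hxU hxV) rfl





/-- Between two nested distinct continua there is a third one, distinct from both. -/
lemma exists_continuum_between {P Q : Set α} (hQc : IsCompact Q) (hQconn : IsConnected Q)
    (hPc : IsCompact P) (hPconn : IsConnected P) (hPQ : P ⊂ Q) :
    ∃ E, IsCompact E ∧ IsConnected E ∧ P ⊆ E ∧ E ⊆ Q ∧ P ≠ E ∧ E ≠ Q := by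
  classical
  obtain ⟨x₀, hx₀Q, hx₀P⟩ := exists_of_ssubset hPQ
  obtain ⟨p, hp⟩ := hPconn.nonempty
  set ε := infDist x₀ P with hε
  have hεpos : 0 < ε :=
    (hPc.isClosed.notMem_iff_infDist_pos ⟨p, hp⟩).1 hx₀P
  set V := Q ∩ {y | infDist y P ≤ ε/2} with hV
  have hVclosed : IsClosed V := hQc.isClosed.inter (isClosed_le (continuous_infDist_pt P) continuous_const)
  have hVcomp : IsCompact V := hQc.inter_right (isClosed_le (continuous_infDist_pt P) continuous_const)
  have hPV : P ⊆ V := fun y hy => ⟨hPQ.1 hy, by simp [infDist_zero_of_mem hy]; linarith⟩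
  have hpV : p ∈ V := hPV hp
  have hx₀V : x₀ ∉ V := by
    rintro ⟨-, h⟩
    rw [mem_setOf_eq, ← hε] at h; linarith
  set E := connectedComponentIn V p with hE
  have hEconn : IsConnected E := isConnected_connectedComponentIn_iff.2 hpV
  have hEV : E ⊆ V := connectedComponentIn_subset V p
  have hPE : P ⊆ E := hPconn.isPreconnected.subset_connectedComponentIn hp hPV
  have hEimg : E = Subtype.val '' connectedComponent (⟨p, hpV⟩ : V) :=
    connectedComponentIn_eq_image hpV
  have hVcs : CompactSpace V := isCompact_iff_compactSpace.1 hVcomp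
  have hEcomp : IsCompact E := by
    rw [hEimg]
    exact (isClosed_connectedComponent.isCompact).image continuous_subtype_val
  -- key claim : E has a point at distance ≥ ε/2 from P
  have hkey : ∃ z ∈ E, ε/2 ≤ infDist z P := by
    by_contra h
    push_neg at h
    -- the component is inside the open set O
    set O : Set V := {v : V | infDist (v : α) P < ε/2} with hO
    have hOopen : IsOpen O := by
      have : Continuous fun v : V => infDist (v : α) P :=
        (continuous_infDist_pt P).comp continuous_subtype_val
      exact isOpen_lt this continuous_const
    have hccO : connectedComponent (⟨p, hpV⟩ : V) ⊆ O := by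
      intro v hv
      exact h v.1 (hEimg ▸ mem_image_of_mem _ hv)
    -- find a clopen set between
    have hclop : ∃ Z : Set V, IsClopen Z ∧ (⟨p, hpV⟩ : V) ∈ Z ∧ Z ⊆ O := by
      by_contra hcon
      push_neg at hcon
      set ι := {s : Set V // IsClopen s ∧ (⟨p, hpV⟩ : V) ∈ s} with hι
      have hιne : Nonempty ι := ⟨⟨univ, isClopen_univ, mem_univ _⟩⟩
      have hne' : ∀ i : ι, ((i : Set V) ∩ Oᶜ).Nonempty := by
        intro i
        rcases not_subset.1 (hcon i i.2.1 i.2.2) with ⟨v, hv1, hv2⟩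
        exact ⟨v, hv1, hv2⟩
      have hdir : Directed (· ⊇ ·) (fun i : ι => (i : Set V) ∩ Oᶜ) := by
        intro i j
        refine ⟨⟨(i : Set V) ∩ j, i.2.1.inter j.2.1, i.2.2, j.2.2⟩, ?_, ?_⟩
        · exact inter_subset_inter_left _ inter_subset_left
        · exact inter_subset_inter_left _ inter_subset_right
      have := IsCompact.nonempty_iInter_of_directed_nonempty_isCompact_isClosed
        (fun i : ι => (i : Set V) ∩ Oᶜ) hdir hne'
        (fun i => i.2.1.1.isCompact.inter_right hOopen.isClosed_compl)
        (fun i => i.2.1.1.inter hOopen.isClosed_compl)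
      rcases this with ⟨v, hv⟩
      simp only [mem_iInter, mem_inter_iff] at hv
      have hvcc : v ∈ connectedComponent (⟨p, hpV⟩ : V) := by
        rw [connectedComponent_eq_iInter_isClopen]
        exact mem_iInter.2 fun i => (hv i).1
      exact (hv ⟨univ, isClopen_univ, mem_univ _⟩).2 (hccO hvcc)
    obtain ⟨Z, hZclop, hpZ, hZO⟩ := hclop
    set W := Subtype.val '' Z with hW
    have hWcomp : IsCompact W := (hZclop.1.isCompact).image continuous_subtype_val
    have hWV : W ⊆ V := by rintro y ⟨v, _, rfl⟩; exact v.2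
    have hWO : ∀ y ∈ W, infDist y P < ε/2 := by rintro y ⟨v, hv, rfl⟩; exact hZO hv
    have hpW : p ∈ W := ⟨⟨p, hpV⟩, hpZ, rfl⟩
    have hx₀W : x₀ ∉ W := fun hx => hx₀V (hWV hx)
    -- W is relatively open in Q
    have hop : ∀ y, y ∈ W → ∃ δ, 0 < δ ∧ ∀ y' ∈ Q, dist y' y < δ → y' ∈ W := by
      rintro y ⟨v, hvZ, rfl⟩
      rcases Metric.isOpen_iff.1 hZclop.2 v hvZ with ⟨δ₁, hδ₁, hball⟩
      have hvO : infDist (v : α) P < ε/2 := hZO hvZ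
      refine ⟨min δ₁ (ε/2 - infDist (v : α) P), by
        simp only [lt_min_iff]; exact ⟨hδ₁, by linarith⟩, ?_⟩
      intro y' hy' hd
      have h1 : infDist y' P < ε/2 := by
        have := infDist_le_infDist_add_dist (x := y') (y := (v : α)) (s := P)
        have h2 : dist y' (v : α) < ε/2 - infDist (v : α) P := lt_of_lt_of_le hd (min_le_right _ _)
        linarith
      have hy'V : y' ∈ V := ⟨hy', le_of_lt h1⟩
      have : (⟨y', hy'V⟩ : V) ∈ Z := by
        apply hball
        rw [mem_ball, Subtype.dist_eq]
        exact lt_of_lt_of_le hd (min_le_left _ _)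
      exact ⟨_, this, rfl⟩
    -- contradiction with connectedness of Q
    set U₁ := ⋃ (y : α) (h : y ∈ W), ball y (hop y h).choose with hU₁
    have hU₁open : IsOpen U₁ := isOpen_iUnion fun y => isOpen_iUnion fun h => isOpen_ball
    have hQU₁W : ∀ z ∈ Q, z ∈ U₁ → z ∈ W := by
      intro z hzQ hzU
      rcases mem_iUnion₂.1 hzU with ⟨y, hy, hball⟩
      exact (hop y hy).choose_spec.2 z hzQ (mem_ball.1 hball)
    have hWU₁ : W ⊆ U₁ := fun y hy => mem_iUnion₂.2 ⟨y, hy, mem_ball_self (hop y hy).choose_spec.1⟩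
    rcases hQconn.isPreconnected U₁ Wᶜ hU₁open hWcomp.isClosed.isOpen_compl
      (fun z hz => by
        by_cases h : z ∈ W
        · exact Or.inl (hWU₁ h)
        · exact Or.inr h)
      ⟨p, hPQ.1 hp, hWU₁ hpW⟩ ⟨x₀, hx₀Q, hx₀W⟩ with ⟨z, hzQ, hzU₁, hzW⟩
    exact hzW (hQU₁W z hzQ hzU₁)
  obtain ⟨z, hzE, hz⟩ := hkey
  have hzP : z ∉ P := fun h => by rw [infDist_zero_of_mem h] at hz; linarith
  exact ⟨E, hEcomp, hEconn, hPE, hEV.trans inter_subset_left, fun h => hzP (h ▸ hzE),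
    fun h => hx₀V (hEV (h ▸ hx₀Q))⟩




lemma hausdorffDist_union_le {s t s' t' : Set α}
    (hs : s.Nonempty) (ht : t.Nonempty) (hs' : s'.Nonempty) (ht' : t'.Nonempty)
    (hbs : Bornology.IsBounded s) (hbt : Bornology.IsBounded t)
    (hbs' : Bornology.IsBounded s') (hbt' : Bornology.IsBounded t') :
    hausdorffDist (s ∪ t) (s' ∪ t') ≤ max (hausdorffDist s s') (hausdorffDist t t') := by
  have fin1 : EMetric.hausdorffEdist s s' ≠ ⊤ := hd_fin hs hs' hbs hbs'
  have fin2 : EMetric.hausdorffEdist t t' ≠ ⊤ := hd_fin ht ht' hbt hbt'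
  have fin1' : EMetric.hausdorffEdist s' s ≠ ⊤ := by
    convert fin1 using 1; exact EMetric.hausdorffEdist_comm
  have fin2' : EMetric.hausdorffEdist t' t ≠ ⊤ := by
    convert fin2 using 1; exact EMetric.hausdorffEdist_comm
  refine hausdorffDist_le_of_infDist (le_max_iff.2 (Or.inl hausdorffDist_nonneg)) ?_ ?_
  · rintro x (hx | hx)
    · exact le_trans (le_trans (infDist_le_infDist_of_subset subset_union_left hs')
        (infDist_le_hausdorffDist_of_mem hx fin1)) (le_max_left _ _)
    · exact le_trans (le_trans (infDist_le_infDist_of_subset subset_union_right ht')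
        (infDist_le_hausdorffDist_of_mem hx fin2)) (le_max_right _ _)
  · rintro x (hx | hx)
    · refine le_trans (le_trans (infDist_le_infDist_of_subset subset_union_left hs) ?_)
        (le_max_left _ _)
      rw [hausdorffDist_comm]
      exact infDist_le_hausdorffDist_of_mem hx fin1'
    · refine le_trans (le_trans (infDist_le_infDist_of_subset subset_union_right ht) ?_)
        (le_max_right _ _)
      rw [hausdorffDist_comm]
      exact infDist_le_hausdorffDist_of_mem hx fin2'


end Aux


variable {X : Type*} [MetricSpace X]

abbrev carr (C : Hyperspace X) : Set X := (C.1 : Set X)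

def Hmk (s : Set X) (hc : IsCompact s) (hconn : IsConnected s) : Hyperspace X :=
  ⟨⟨⟨s, hc⟩, hconn.nonempty⟩, hconn⟩

@[simp] lemma carr_Hmk {s : Set X} {hc : IsCompact s} {hconn : IsConnected s} :
    carr (Hmk s hc hconn) = s := rfl

lemma Hext {C D : Hyperspace X} (h : carr C = carr D) : C = D :=
  Subtype.ext (NonemptyCompacts.ext h)

lemma carr_compact (C : Hyperspace X) : IsCompact (carr C) := C.1.isCompact

lemma carr_conn (C : Hyperspace X) : IsConnected (carr C) := C.2

lemma carr_ne (C : Hyperspace X) : (carr C).Nonempty := C.1.nonempty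

lemma hyper_dist (C D : Hyperspace X) : dist C D = hausdorffDist (carr C) (carr D) := by
  rw [Subtype.dist_eq, NonemptyCompacts.dist_eq]

/-- Hausdorff limit of a decreasing sequence of subcontinua. -/
lemma iInter_hyper [CompactSpace X] (Cn : ℕ → Hyperspace X)
    (hanti : ∀ m n, m ≤ n → carr (Cn n) ⊆ carr (Cn m)) :
    ∃ T : Hyperspace X, carr T = (⋂ n, carr (Cn n)) ∧ Tendsto Cn atTop (𝓝 T) := by
  have hcpt : ∀ n, IsCompact (carr (Cn n)) := fun n => carr_compact _
  have hne : ∀ n, (carr (Cn n)).Nonempty := fun n => carr_ne _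
  have hTc : IsCompact (⋂ n, carr (Cn n)) :=
    (hcpt 0).of_isClosed_subset (isClosed_iInter fun n => (hcpt n).isClosed) (iInter_subset _ 0)
  have hTne : (⋂ n, carr (Cn n)).Nonempty :=
    IsCompact.nonempty_iInter_of_sequence_nonempty_isCompact_isClosed _
      (fun n => hanti n (n+1) (Nat.le_succ n)) hne (hcpt 0) (fun n => (hcpt n).isClosed)
  have hTconn : IsConnected (⋂ n, carr (Cn n)) :=
    ⟨hTne, isPreconnected_iInter_of_antitone hcpt (fun n => (carr_conn (Cn n)).isPreconnected)
      hanti hne⟩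
  refine ⟨Hmk _ hTc hTconn, rfl, ?_⟩
  rw [Metric.tendsto_atTop]
  intro ε hε
  obtain ⟨n, hn⟩ := exists_hausdorffDist_iInter_lt hcpt hanti hne hε
  refine ⟨n, fun m hm => ?_⟩
  rw [hyper_dist, carr_Hmk]
  exact lt_of_le_of_lt (hausdorffDist_le_of_nested (iInter_subset _ m) (hanti n m hm)
    hTne (hcpt n).isBounded) hn

/-- Hausdorff limit of an increasing sequence of subcontinua. -/
lemma iUnion_hyper [CompactSpace X] (Cn : ℕ → Hyperspace X)
    (hmono : ∀ m n, m ≤ n → carr (Cn m) ⊆ carr (Cn n)) :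
    ∃ T : Hyperspace X, carr T = closure (⋃ n, carr (Cn n)) ∧ Tendsto Cn atTop (𝓝 T) := by
  have hcpt : ∀ n, IsCompact (carr (Cn n)) := fun n => carr_compact _
  have hTc : IsCompact (closure (⋃ n, carr (Cn n))) := isClosed_closure.isCompact
  obtain ⟨p, hp⟩ := carr_ne (Cn 0)
  have hpU : ∀ n, p ∈ carr (Cn n) := fun n => hmono 0 n (Nat.zero_le n) hp
  have hUconn : IsPreconnected (⋃ n, carr (Cn n)) := by
    rw [← sUnion_range]
    exact isPreconnected_sUnion p _ (by rintro s ⟨n, rfl⟩; exact hpU n)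
      (by rintro s ⟨n, rfl⟩; exact (carr_conn (Cn n)).isPreconnected)
  have hTconn : IsConnected (closure (⋃ n, carr (Cn n))) :=
    ⟨⟨p, subset_closure (mem_iUnion.2 ⟨0, hp⟩)⟩, hUconn.closure⟩
  refine ⟨Hmk _ hTc hTconn, rfl, ?_⟩
  rw [Metric.tendsto_atTop]
  intro ε hε
  obtain ⟨n, hn⟩ := exists_hausdorffDist_closure_iUnion_lt hmono (carr_ne _) hTc hε
  refine ⟨n, fun m hm => ?_⟩
  rw [hyper_dist, carr_Hmk, hausdorffDist_comm]
  have h2 : carr (Cn m) ⊆ closure (⋃ k, carr (Cn k)) :=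
    (subset_iUnion (fun k => carr (Cn k)) m).trans subset_closure
  calc hausdorffDist (closure (⋃ k, carr (Cn k))) (carr (Cn m))
      ≤ hausdorffDist (closure (⋃ k, carr (Cn k))) (carr (Cn n)) :=
        hausdorffDist_le_of_nested' (hmono n m hm) h2 (carr_ne _) hTc.isBounded
    _ < ε := by rwa [hausdorffDist_comm]






lemma mu_mono (μ : Hyperspace X → ℝ)
    (hμmono : ∀ A B : Hyperspace X, carr A ⊂ carr B → μ A < μ B)
    {C D : Hyperspace X} (h : carr C ⊆ carr D) : μ C ≤ μ D := by
  by_cases heq : carr C = carr D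
  · rw [Hext heq]
  · exact (hμmono C D (h.ssubset_of_ne heq)).le

lemma mu_eq (μ : Hyperspace X → ℝ)
    (hμmono : ∀ A B : Hyperspace X, carr A ⊂ carr B → μ A < μ B)
    {C D : Hyperspace X} (h : carr C ⊆ carr D) (he : μ C = μ D) : C = D := by
  by_cases heq : carr C = carr D
  · exact Hext heq
  · exact absurd he (hμmono C D (h.ssubset_of_ne heq)).ne

/-- Existence of order arcs, parametrized by the Whitney map value. -/
lemma exists_orderArc [CompactSpace X] (μ : Hyperspace X → ℝ) (hμcont : Continuous μ)
    (hμmono : ∀ A B : Hyperspace X, carr A ⊂ carr B → μ A < μ B)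
    (P Q : Hyperspace X) (hPQ : carr P ⊂ carr Q) :
    ∃ σ : ℝ → Hyperspace X, Continuous σ ∧
      (∀ a b, a ≤ b → carr (σ a) ⊆ carr (σ b)) ∧
      (∀ s, μ P ≤ s → s ≤ μ Q → μ (σ s) = s) ∧
      (∀ s, s ≤ μ P → σ s = P) ∧ (∀ s, μ Q ≤ s → σ s = Q) ∧
      (∀ s, carr P ⊆ carr (σ s) ∧ carr (σ s) ⊆ carr Q) := by
  classical
  have hPQ' : μ P < μ Q := hμmono P Q hPQ
  set r : {C : Hyperspace X // carr P ⊆ carr C ∧ carr C ⊆ carr Q} →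
      {C : Hyperspace X // carr P ⊆ carr C ∧ carr C ⊆ carr Q} → Prop :=
    fun C D => carr C.1 ⊆ carr D.1 with hr
  set Pg : {C : Hyperspace X // carr P ⊆ carr C ∧ carr C ⊆ carr Q} :=
    ⟨P, subset_rfl, hPQ.1⟩ with hPgdef
  set Qg : {C : Hyperspace X // carr P ⊆ carr C ∧ carr C ⊆ carr Q} :=
    ⟨Q, hPQ.1, subset_rfl⟩ with hQgdef
  have hchain0 : IsChain r {Pg, Qg} := by
    intro a ha b hb hab
    rcases ha with rfl | rfl <;> rcases hb with rfl | rfl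
    · exact absurd rfl hab
    · exact Or.inl hPQ.1
    · exact Or.inr hPQ.1
    · exact absurd rfl hab
  obtain ⟨𝒞, h𝒞max, hsub𝒞⟩ := hchain0.exists_maxChain
  have hPg𝒞 : Pg ∈ 𝒞 := hsub𝒞 (by simp)
  have hQg𝒞 : Qg ∈ 𝒞 := hsub𝒞 (by simp)
  have hcomp : ∀ C ∈ 𝒞, ∀ D ∈ 𝒞, carr C.1 ⊆ carr D.1 ∨ carr D.1 ⊆ carr C.1 := by
    intro C hC D hD
    by_cases h : C = D
    · exact Or.inl (h ▸ subset_rfl)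
    · exact h𝒞max.1 hC hD h
  have hmemmax : ∀ E, (∀ C ∈ 𝒞, carr E.1 ⊆ carr C.1 ∨ carr C.1 ⊆ carr E.1) → E ∈ 𝒞 := by
    intro E hE
    by_contra hnE
    have hch : IsChain r (insert E 𝒞) := h𝒞max.1.insert (fun C hC _ => hE C hC)
    have heq := h𝒞max.2 hch (subset_insert _ _)
    exact hnE (heq ▸ mem_insert _ _)
  have hord : ∀ C ∈ 𝒞, ∀ D ∈ 𝒞, μ C.1 ≤ μ D.1 → carr C.1 ⊆ carr D.1 := by
    intro C hC D hD hle
    rcases hcomp C hC D hD with h | h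
    · exact h
    · have h1 : μ C.1 = μ D.1 := le_antisymm hle (mu_mono μ hμmono h)
      rw [mu_eq μ hμmono h h1.symm]
  have huniq : ∀ C ∈ 𝒞, ∀ D ∈ 𝒞, μ C.1 = μ D.1 → C = D := fun C hC D hD h =>
    Subtype.ext (mu_eq μ hμmono (hord C hC D hD h.le) h)
  -- every intermediate value is attained on the chain
  have hattain : ∀ s, μ P ≤ s → s ≤ μ Q → ∃ C ∈ 𝒞, μ C.1 = s := by
    intro s hs1 hs2
    by_contra hnot
    push_neg at hnot
    set U := {C | C ∈ 𝒞 ∧ μ C.1 < s} with hU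
    set V := {C | C ∈ 𝒞 ∧ s < μ C.1} with hV
    have hPU : Pg ∈ U := ⟨hPg𝒞, lt_of_le_of_ne hs1 (hnot Pg hPg𝒞)⟩
    have hQV : Qg ∈ V := ⟨hQg𝒞, lt_of_le_of_ne hs2 (fun h => hnot Qg hQg𝒞 h.symm)⟩
    have hUV : ∀ C ∈ 𝒞, C ∈ U ∨ C ∈ V := by
      intro C hC
      rcases lt_trichotomy (μ C.1) s with h | h | h
      · exact Or.inl ⟨hC, h⟩
      · exact absurd h (hnot C hC)
      · exact Or.inr ⟨hC, h⟩
    -- V has a minimum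
    have hminV : ∃ Cs ∈ V, ∀ C ∈ V, carr Cs.1 ⊆ carr C.1 := by
      set M := (fun C : {C : Hyperspace X // carr P ⊆ carr C ∧ carr C ⊆ carr Q} => μ C.1) '' V
        with hM
      have hMne : M.Nonempty := ⟨_, Qg, hQV, rfl⟩
      have hMbdd : BddBelow M := ⟨s, by rintro _ ⟨C, hC, rfl⟩; exact hC.2.le⟩
      have hsM : ∀ x ∈ M, s ≤ x := by rintro _ ⟨C, hC, rfl⟩; exact hC.2.le
      by_cases hmin : ∃ C ∈ V, μ C.1 = sInf M
      · obtain ⟨C, hCV, hCeq⟩ := hmin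
        exact ⟨C, hCV, fun D hDV =>
          hord C hCV.1 D hDV.1 (hCeq ▸ csInf_le hMbdd ⟨D, hDV, rfl⟩)⟩
      · obtain ⟨u, hu_anti, hu_tend, hu_mem⟩ := exists_seq_tendsto_sInf hMne hMbdd
        have hex : ∀ n, ∃ C, C ∈ V ∧ μ C.1 = u n := by
          intro n; rcases hu_mem n with ⟨C, hC, hCe⟩; exact ⟨C, hC, hCe⟩
        choose Cf hCfV hCfμ using hex
        have hanti' : ∀ m n, m ≤ n → carr ((Cf n).1) ⊆ carr ((Cf m).1) := fun m n h =>
          hord _ (hCfV n).1 _ (hCfV m).1 (by rw [hCfμ, hCfμ]; exact hu_anti h)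
        obtain ⟨T, hTeq, hTtend⟩ := iInter_hyper (fun n => (Cf n).1) hanti'
        have hμT : μ T = sInf M := by
          have h1 : Tendsto (fun n => μ (Cf n).1) atTop (𝓝 (μ T)) :=
            (hμcont.tendsto T).comp hTtend
          have h2 : Tendsto (fun n => μ (Cf n).1) atTop (𝓝 (sInf M)) := by
            simpa only [hCfμ] using hu_tend
          exact tendsto_nhds_unique h1 h2
        have hsInf : s ≤ sInf M := le_csInf hMne hsM
        have hTb : carr P ⊆ carr T ∧ carr T ⊆ carr Q := by
          constructor
          · rw [hTeq]; exact subset_iInter fun n => (Cf n).2.1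
          · rw [hTeq]; exact (iInter_subset _ 0).trans (Cf 0).2.2
        have hTle : ∀ C ∈ V, carr T ⊆ carr C.1 := by
          intro C hC
          have hlt : sInf M < μ C.1 :=
            lt_of_le_of_ne (csInf_le hMbdd ⟨C, hC, rfl⟩) (fun he => hmin ⟨C, hC, he.symm⟩)
          obtain ⟨n, hn⟩ := (hu_tend.eventually_lt_const hlt).exists
          rw [hTeq]
          exact (iInter_subset _ n).trans (hord _ (hCfV n).1 _ hC.1 (by rw [hCfμ]; exact hn.le))
        have hTmem : (⟨T, hTb⟩ : {C : Hyperspace X // carr P ⊆ carr C ∧ carr C ⊆ carr Q}) ∈ 𝒞 := by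
          apply hmemmax
          intro C hC
          rcases hUV C hC with h | h
          · refine Or.inr ?_
            show carr C.1 ⊆ carr T
            rw [hTeq]
            refine subset_iInter fun n => hord _ h.1 _ (hCfV n).1 ?_
            rw [hCfμ]
            exact le_of_lt (lt_of_lt_of_le h.2 (hsM _ (hu_mem n)))
          · exact Or.inl (hTle C h)
        have hμTs : s < μ T := by
          rcases hUV _ hTmem with h | h
          · exact absurd (hμT ▸ h.2) (not_lt.2 hsInf)
          · exact h.2
        exact ⟨⟨T, hTb⟩, ⟨hTmem, hμTs⟩, fun C hC => hTle C hC⟩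
    -- U has a maximum
    have hmaxU : ∃ Ds ∈ U, ∀ C ∈ U, carr C.1 ⊆ carr Ds.1 := by
      set M := (fun C : {C : Hyperspace X // carr P ⊆ carr C ∧ carr C ⊆ carr Q} => μ C.1) '' U
        with hM
      have hMne : M.Nonempty := ⟨_, Pg, hPU, rfl⟩
      have hMbdd : BddAbove M := ⟨s, by rintro _ ⟨C, hC, rfl⟩; exact hC.2.le⟩
      have hsM : ∀ x ∈ M, x ≤ s := by rintro _ ⟨C, hC, rfl⟩; exact hC.2.le
      by_cases hmax : ∃ C ∈ U, μ C.1 = sSup M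
      · obtain ⟨C, hCU, hCeq⟩ := hmax
        exact ⟨C, hCU, fun D hDU =>
          hord D hDU.1 C hCU.1 (hCeq ▸ le_csSup hMbdd ⟨D, hDU, rfl⟩)⟩
      · obtain ⟨u, hu_mono, hu_tend, hu_mem⟩ := exists_seq_tendsto_sSup hMne hMbdd
        have hex : ∀ n, ∃ C, C ∈ U ∧ μ C.1 = u n := by
          intro n; rcases hu_mem n with ⟨C, hC, hCe⟩; exact ⟨C, hC, hCe⟩
        choose Cf hCfU hCfμ using hex
        have hmono' : ∀ m n, m ≤ n → carr ((Cf m).1) ⊆ carr ((Cf n).1) := fun m n h =>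
          hord _ (hCfU m).1 _ (hCfU n).1 (by rw [hCfμ, hCfμ]; exact hu_mono h)
        obtain ⟨T, hTeq, hTtend⟩ := iUnion_hyper (fun n => (Cf n).1) hmono'
        have hμT : μ T = sSup M := by
          have h1 : Tendsto (fun n => μ (Cf n).1) atTop (𝓝 (μ T)) :=
            (hμcont.tendsto T).comp hTtend
          have h2 : Tendsto (fun n => μ (Cf n).1) atTop (𝓝 (sSup M)) := by
            simpa only [hCfμ] using hu_tend
          exact tendsto_nhds_unique h1 h2
        have hsSup : sSup M ≤ s := csSup_le hMne hsM
        have hTb : carr P ⊆ carr T ∧ carr T ⊆ carr Q := by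
          constructor
          · rw [hTeq]
            exact ((Cf 0).2.1.trans (subset_iUnion (fun n => carr (Cf n).1) 0)).trans
              subset_closure
          · rw [hTeq]
            exact closure_minimal (iUnion_subset fun n => (Cf n).2.2)
              (carr_compact Q).isClosed
        have hTge : ∀ C ∈ U, carr C.1 ⊆ carr T := by
          intro C hC
          have hlt : μ C.1 < sSup M :=
            lt_of_le_of_ne (le_csSup hMbdd ⟨C, hC, rfl⟩) (fun he => hmax ⟨C, hC, he⟩)
          obtain ⟨n, hn⟩ := (hu_tend.eventually_const_lt hlt).exists
          rw [hTeq]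
          exact ((hord _ hC.1 _ (hCfU n).1 (by rw [hCfμ]; exact hn.le)).trans
            (subset_iUnion (fun k => carr (Cf k).1) n)).trans subset_closure
        have hTmem : (⟨T, hTb⟩ : {C : Hyperspace X // carr P ⊆ carr C ∧ carr C ⊆ carr Q}) ∈ 𝒞 := by
          apply hmemmax
          intro C hC
          rcases hUV C hC with h | h
          · exact Or.inr (hTge C h)
          · refine Or.inl ?_
            show carr T ⊆ carr C.1
            rw [hTeq]
            refine closure_minimal (iUnion_subset fun n => hord _ (hCfU n).1 _ h.1 ?_)
              (carr_compact C.1).isClosed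
            rw [hCfμ]
            exact le_of_lt (lt_of_le_of_lt (hsM _ (hu_mem n)) h.2)
        have hμTs : μ T < s := by
          rcases hUV _ hTmem with h | h
          · exact h.2
          · exact absurd (hμT ▸ h.2) (not_lt.2 hsSup)
        exact ⟨⟨T, hTb⟩, ⟨hTmem, hμTs⟩, fun C hC => hTge C hC⟩
    obtain ⟨Cs, hCsV, hCsmin⟩ := hminV
    obtain ⟨Ds, hDsU, hDsmax⟩ := hmaxU
    have hDCμ : μ Ds.1 < μ Cs.1 := lt_trans hDsU.2 hCsV.2
    have hDC : carr Ds.1 ⊆ carr Cs.1 := hord _ hDsU.1 _ hCsV.1 hDCμ.le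
    have hDCne : carr Ds.1 ≠ carr Cs.1 := fun h => hDCμ.ne (by rw [Hext h])
    obtain ⟨E, hEc, hEconn, hDE, hECs, hne1, hne2⟩ :=
      exists_continuum_between (carr_compact Cs.1) (carr_conn Cs.1)
        (carr_compact Ds.1) (carr_conn Ds.1) (hDC.ssubset_of_ne hDCne)
    have hEb : carr P ⊆ carr (Hmk E hEc hEconn) ∧ carr (Hmk E hEc hEconn) ⊆ carr Q :=
      ⟨Ds.2.1.trans hDE, hECs.trans Cs.2.2⟩
    have hEmem := hmemmax ⟨Hmk E hEc hEconn, hEb⟩ (fun C hC => by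
      rcases hUV C hC with h | h
      · exact Or.inr (show carr C.1 ⊆ E from (hDsmax C h).trans hDE)
      · exact Or.inl (show (E : Set X) ⊆ carr C.1 from hECs.trans (hCsmin C h)))
    rcases hUV _ hEmem with h | h
    · exact hne1 (Subset.antisymm hDE (hDsmax _ h))
    · exact hne2 (Subset.antisymm hECs (hCsmin _ h))
  -- define the arc
  set c : ℝ → ℝ := fun s => (projIcc (μ P) (μ Q) hPQ'.le s : ℝ) with hc
  have hc1 : ∀ s, μ P ≤ c s := fun s => (projIcc (μ P) (μ Q) hPQ'.le s).2.1
  have hc2 : ∀ s, c s ≤ μ Q := fun s => (projIcc (μ P) (μ Q) hPQ'.le s).2.2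
  have hcmono : ∀ a b, a ≤ b → c a ≤ c b := fun a b h => monotone_projIcc hPQ'.le h
  have hclip : ∀ a b, c a - c b ≤ |a - b| := by
    intro a b
    have := (LipschitzWith.projIcc hPQ'.le).dist_le_mul a b
    rw [Subtype.dist_eq, Real.dist_eq, Real.dist_eq] at this
    calc c a - c b ≤ |c a - c b| := le_abs_self _
      _ ≤ |a - b| := by simpa using this
  have hcid : ∀ s, μ P ≤ s → s ≤ μ Q → c s = s := by
    intro s h1 h2
    show (max (μ P) (min (μ Q) s)) = s
    rw [min_eq_right h2, max_eq_right h1]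
  have hch : ∀ s, ∃ C ∈ 𝒞, μ C.1 = c s := fun s => hattain (c s) (hc1 s) (hc2 s)
  have hch' : ∀ s, ∃ C, C ∈ 𝒞 ∧ μ C.1 = c s := by
    intro s; rcases hch s with ⟨C, h1, h2⟩; exact ⟨C, h1, h2⟩
  choose e he𝒞 heμ using hch'
  set σ : ℝ → Hyperspace X := fun s => (e s).1 with hσ
  have hσμ : ∀ s, μ (σ s) = c s := heμ
  have hσmono : ∀ a b, a ≤ b → carr (σ a) ⊆ carr (σ b) := fun a b h =>
    hord _ (he𝒞 a) _ (he𝒞 b) (by rw [heμ, heμ]; exact hcmono a b h)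
  have hσeq : ∀ a b, c a = c b → σ a = σ b := fun a b h =>
    congrArg Subtype.val (huniq _ (he𝒞 a) _ (he𝒞 b) (by rw [heμ, heμ, h]))
  have hσP : ∀ s, s ≤ μ P → σ s = P := by
    intro s hs
    have hcs : c s = μ P := by
      show (projIcc (μ P) (μ Q) hPQ'.le s : ℝ) = μ P
      rw [projIcc_of_le_left _ hs]
    have := huniq _ (he𝒞 s) _ hPg𝒞 (by rw [heμ, hcs])
    exact congrArg Subtype.val this
  have hσQ : ∀ s, μ Q ≤ s → σ s = Q := by
    intro s hs
    have hcs : c s = μ Q := by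
      show (projIcc (μ P) (μ Q) hPQ'.le s : ℝ) = μ Q
      rw [projIcc_of_right_le _ hs]
    have := huniq _ (he𝒞 s) _ hQg𝒞 (by rw [heμ, hcs])
    exact congrArg Subtype.val this
  have hσmono' : ∀ a b : ℝ, c a ≤ c b → carr (σ a) ⊆ carr (σ b) := fun a b h =>
    hord _ (he𝒞 a) _ (he𝒞 b) (by rw [heμ, heμ]; exact h)
  -- continuity
  have hcont : Continuous σ := by
    rw [Metric.continuous_iff]
    intro s₀ ε hε
    have hR : ∃ δ > 0, ∀ s', s₀ ≤ s' → s' - s₀ < δ → dist (σ s') (σ s₀) < ε := by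
      by_cases hq : μ Q ≤ c s₀
      · refine ⟨1, one_pos, fun s' h1 h2 => ?_⟩
        have hce : c s' = c s₀ := le_antisymm ((hc2 s').trans hq) (hcmono _ _ h1)
        rw [hσeq _ _ hce, dist_self]
        exact hε
      · push_neg at hq
        set b : ℕ → ℝ := fun n => c s₀ + (μ Q - c s₀)/(n+1) with hb
        have hbpos : ∀ n : ℕ, (0:ℝ) < (μ Q - c s₀)/(n+1) := fun n =>
          div_pos (by linarith) (by positivity)
        have hble : ∀ n : ℕ, b n ≤ μ Q := by
          intro n
          have h1 : (μ Q - c s₀)/(n+1) ≤ μ Q - c s₀ :=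
            div_le_self (by linarith) (by exact_mod_cast Nat.le_add_left 1 n)
          simp only [hb]; linarith
        have hbge : ∀ n : ℕ, μ P ≤ b n := fun n => by
          have := hbpos n; have := hc1 s₀; simp only [hb]; linarith
        have hcbn : ∀ n, c (b n) = b n := fun n => hcid _ (hbge n) (hble n)
        have hbanti : ∀ m n : ℕ, m ≤ n → b n ≤ b m := by
          intro m n h
          have : (μ Q - c s₀)/(n+1) ≤ (μ Q - c s₀)/(m+1) :=
            div_le_div_of_nonneg_left (by linarith) (by positivity)
              (by exact_mod_cast Nat.add_le_add_right h 1)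
          simp only [hb]; linarith
        have hσbanti : ∀ m n : ℕ, m ≤ n → carr (σ (b n)) ⊆ carr (σ (b m)) := fun m n h =>
          hσmono' _ _ (by rw [hcbn, hcbn]; exact hbanti m n h)
        obtain ⟨T, hTeq, hTt⟩ := iInter_hyper (fun n => σ (b n)) hσbanti
        have hbtend : Tendsto b atTop (𝓝 (c s₀)) := by
          have h0 : Tendsto (fun n : ℕ => (μ Q - c s₀) * (1/(n+1))) atTop
              (𝓝 ((μ Q - c s₀) * 0)) :=
            tendsto_one_div_add_atTop_nhds_zero_nat.const_mul _
          have := (tendsto_const_nhds : Tendsto (fun _ : ℕ => c s₀) atTop (𝓝 (c s₀))).add h0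
          simpa [hb, mul_one_div, div_eq_mul_inv] using this
        have hμbn : ∀ n, μ (σ (b n)) = b n := fun n => by rw [hσμ, hcbn]
        have hμT : μ T = c s₀ := by
          refine tendsto_nhds_unique ((hμcont.tendsto T).comp hTt) ?_
          show Tendsto (fun n => μ (σ (b n))) atTop (𝓝 (c s₀))
          simpa only [hμbn] using hbtend
        have hsub : carr (σ s₀) ⊆ carr T := by
          rw [hTeq]
          exact subset_iInter fun n => hσmono' _ _ (by
            rw [hcbn]
            show c s₀ ≤ c s₀ + (μ Q - c s₀)/(n+1)
            have := hbpos n; linarith)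
        have hTσ : T = σ s₀ := (mu_eq μ hμmono hsub (by rw [hσμ, hμT])).symm
        obtain ⟨N, hN⟩ := Metric.tendsto_atTop.1 (hTσ ▸ hTt) ε hε
        have hdN : dist (σ (b N)) (σ s₀) < ε := hN N le_rfl
        refine ⟨(μ Q - c s₀)/(N+1), hbpos N, fun s' h1 h2 => ?_⟩
        have hcs' : c s' ≤ b N := by
          have := hclip s' s₀
          rw [abs_of_nonneg (by linarith)] at this
          simp only [hb]; linarith
        have hsub1 : carr (σ s₀) ⊆ carr (σ s') := hσmono' _ _ (hcmono _ _ h1)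
        have hsub2 : carr (σ s') ⊆ carr (σ (b N)) := hσmono' _ _ (by rw [hcbn]; exact hcs')
        calc dist (σ s') (σ s₀)
            ≤ dist (σ (b N)) (σ s₀) := by
              rw [hyper_dist, hyper_dist]
              exact hausdorffDist_le_of_nested hsub1 hsub2 (carr_ne _)
                (carr_compact _).isBounded
          _ < ε := hdN
    have hL : ∃ δ > 0, ∀ s', s' ≤ s₀ → s₀ - s' < δ → dist (σ s') (σ s₀) < ε := by
      by_cases hp : c s₀ ≤ μ P
      · refine ⟨1, one_pos, fun s' h1 h2 => ?_⟩
        have hce : c s' = c s₀ := le_antisymm (hcmono _ _ h1) (hp.trans (hc1 s'))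
        rw [hσeq _ _ hce, dist_self]
        exact hε
      · push_neg at hp
        set b : ℕ → ℝ := fun n => c s₀ - (c s₀ - μ P)/(n+1) with hb
        have hbpos : ∀ n : ℕ, (0:ℝ) < (c s₀ - μ P)/(n+1) := fun n =>
          div_pos (by linarith) (by positivity)
        have hbge : ∀ n : ℕ, μ P ≤ b n := by
          intro n
          have h1 : (c s₀ - μ P)/(n+1) ≤ c s₀ - μ P :=
            div_le_self (by linarith) (by exact_mod_cast Nat.le_add_left 1 n)
          simp only [hb]; linarith
        have hble : ∀ n : ℕ, b n ≤ μ Q := fun n => by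
          have := hbpos n; have := hc2 s₀; simp only [hb]; linarith
        have hcbn : ∀ n, c (b n) = b n := fun n => hcid _ (hbge n) (hble n)
        have hbmono : ∀ m n : ℕ, m ≤ n → b m ≤ b n := by
          intro m n h
          have : (c s₀ - μ P)/(n+1) ≤ (c s₀ - μ P)/(m+1) :=
            div_le_div_of_nonneg_left (by linarith) (by positivity)
              (by exact_mod_cast Nat.add_le_add_right h 1)
          simp only [hb]; linarith
        have hσbmono : ∀ m n : ℕ, m ≤ n → carr (σ (b m)) ⊆ carr (σ (b n)) := fun m n h =>
          hσmono' _ _ (by rw [hcbn, hcbn]; exact hbmono m n h)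
        obtain ⟨T, hTeq, hTt⟩ := iUnion_hyper (fun n => σ (b n)) hσbmono
        have hbtend : Tendsto b atTop (𝓝 (c s₀)) := by
          have h0 : Tendsto (fun n : ℕ => (c s₀ - μ P) * (1/(n+1))) atTop
              (𝓝 ((c s₀ - μ P) * 0)) :=
            tendsto_one_div_add_atTop_nhds_zero_nat.const_mul _
          have := (tendsto_const_nhds : Tendsto (fun _ : ℕ => c s₀) atTop (𝓝 (c s₀))).sub h0
          simpa [hb, mul_one_div, div_eq_mul_inv] using this
        have hμbn : ∀ n, μ (σ (b n)) = b n := fun n => by rw [hσμ, hcbn]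
        have hμT : μ T = c s₀ := by
          refine tendsto_nhds_unique ((hμcont.tendsto T).comp hTt) ?_
          show Tendsto (fun n => μ (σ (b n))) atTop (𝓝 (c s₀))
          simpa only [hμbn] using hbtend
        have hsub : carr T ⊆ carr (σ s₀) := by
          rw [hTeq]
          refine closure_minimal (iUnion_subset fun n => hσmono' _ _ ?_)
            (carr_compact _).isClosed
          rw [hcbn]
          show c s₀ - (c s₀ - μ P)/(n+1) ≤ c s₀
          have := hbpos n; linarith
        have hTσ : T = σ s₀ := mu_eq μ hμmono hsub (by rw [hσμ, hμT])
        obtain ⟨N, hN⟩ := Metric.tendsto_atTop.1 (hTσ ▸ hTt) ε hε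
        have hdN : dist (σ (b N)) (σ s₀) < ε := hN N le_rfl
        refine ⟨(c s₀ - μ P)/(N+1), hbpos N, fun s' h1 h2 => ?_⟩
        have hcs' : b N ≤ c s' := by
          have := hclip s₀ s'
          rw [abs_of_nonneg (by linarith)] at this
          simp only [hb]; linarith
        have hsub1 : carr (σ (b N)) ⊆ carr (σ s') := hσmono' _ _ (by rw [hcbn]; exact hcs')
        have hsub2 : carr (σ s') ⊆ carr (σ s₀) := hσmono' _ _ (hcmono _ _ h1)
        calc dist (σ s') (σ s₀)
            ≤ dist (σ (b N)) (σ s₀) := by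
              rw [hyper_dist, hyper_dist,
                hausdorffDist_comm (s := carr (σ s')),
                hausdorffDist_comm (s := carr (σ (b N)))]
              exact hausdorffDist_le_of_nested' hsub1 hsub2 (carr_ne _)
                (carr_compact _).isBounded
          _ < ε := hdN
    obtain ⟨δR, hδR, hR'⟩ := hR
    obtain ⟨δL, hδL, hL'⟩ := hL
    refine ⟨min δR δL, lt_min hδR hδL, fun a ha => ?_⟩
    rw [Real.dist_eq] at ha
    rcases le_total s₀ a with h | h
    · exact hR' a h (lt_of_le_of_lt (le_abs_self _) (ha.trans_le (min_le_left _ _)))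
    · refine hL' a h ?_
      have : s₀ - a ≤ |a - s₀| := by rw [abs_sub_comm]; exact le_abs_self _
      exact lt_of_le_of_lt this (ha.trans_le (min_le_right _ _))
  exact ⟨σ, hcont, hσmono, (fun s h1 h2 => by rw [hσμ, hcid s h1 h2]), hσP, hσQ,
    fun s => ⟨(e s).2.1, (e s).2.2⟩⟩



/-- Collapsing a path with the interval-constancy property into an arc. -/
lemma collapse {M : Type*} [MetricSpace M] (F : ℝ → M) (hF : Continuous F)
    (a b : ℝ) (hab : a < b)
    (hla : ∀ x, x ≤ a → F x = F a) (hP : ∀ x y z : ℝ, x ≤ y → y ≤ z → F x = F z → F y = F x)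
    (hne : F a ≠ F b) :
    ∃ f : Set.Icc (0:ℝ) 1 → M, Continuous f ∧ Function.Injective f ∧
      f ⟨0, le_refl 0, zero_le_one⟩ = F a ∧ f ⟨1, zero_le_one, le_refl 1⟩ = F b ∧
      ∀ s, ∃ x, f s = F x := by
  classical
  set Img : ℝ → Set M := fun x => F '' Icc a (max x a) with hImg
  have hImgne : ∀ x, (Img x).Nonempty :=
    fun x => ⟨F a, a, ⟨le_rfl, le_max_right _ _⟩, rfl⟩
  have hImgcpt : ∀ x, IsCompact (Img x) := fun x => isCompact_Icc.image hF
  have hImgmono : ∀ x x', x ≤ x' → Img x ⊆ Img x' := fun x x' h =>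
    image_mono (Icc_subset_Icc le_rfl (max_le_max h le_rfl))
  have hmemImg : ∀ x y, a ≤ y → y ≤ x → F y ∈ Img x := fun x y h1 h2 =>
    mem_image_of_mem _ ⟨h1, h2.trans (le_max_left _ _)⟩
  obtain ⟨u, hu⟩ := TopologicalSpace.exists_dense_seq ℝ
  -- continuity of x ↦ infDist z (Img x)
  have hIcont : ∀ z : M, Continuous (fun x => infDist z (Img x)) := by
    intro z
    rw [Metric.continuous_iff]
    intro x₀ ε hε
    have hUC := (isCompact_Icc (a := a - 1) (b := max x₀ a + 2)).uniformContinuousOn_of_continuous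
      hF.continuousOn
    obtain ⟨δ₁, hδ₁, hδ⟩ := Metric.uniformContinuousOn_iff.1 hUC (ε/2) (by linarith)
    have hstep : ∀ x x', x ≤ x' → dist x x₀ < 1 → dist x' x₀ < 1 → x' - x < δ₁ →
        infDist z (Img x) ≤ infDist z (Img x') + ε/2 := by
      intro x x' hxx' hx1 hx2 hdd
      obtain ⟨w, hwmem, hweq⟩ := (hImgcpt x').exists_infDist_eq_dist (hImgne x') z
      obtain ⟨q, hq, rfl⟩ := hwmem
      rw [Real.dist_eq] at hx1 hx2
      have hK : ∀ y : ℝ, a ≤ y → y ≤ max x' a → y ∈ Icc (a-1) (max x₀ a + 2) := by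
        intro y hy1 hy2
        refine ⟨by linarith, ?_⟩
        have hx'b : x' ≤ x₀ + 1 := by
          have h' := abs_sub_lt_iff.1 hx2
          linarith [h'.1]
        have hmm : max x' a ≤ max (x₀ + 1) a := max_le_max hx'b le_rfl
        have h2 : max (x₀+1) a ≤ max x₀ a + 2 := by
          rcases le_total (x₀+1) a with h | h
          · rw [max_eq_right h]; linarith [le_max_right x₀ a]
          · rw [max_eq_left h]; linarith [le_max_left x₀ a]
        linarith [hy2.trans hmm]
      set q' := min q (max x a) with hq'
      have hq'mem : q' ∈ Icc a (max x a) :=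
        ⟨le_min hq.1 (le_max_right _ _), min_le_right _ _⟩
      have hqq' : |q - q'| < δ₁ ∨ q = q' := by
        rcases le_total q (max x a) with h | h
        · exact Or.inr (by rw [hq', min_eq_left h])
        · left
          rw [hq', min_eq_right h, abs_of_nonneg (by linarith)]
          have h1 : q ≤ max x' a := hq.2
          have h2 : max x' a - max x a ≤ x' - x := by
            rcases le_total x a with hxa | hxa
            · rw [max_eq_right hxa]
              rcases le_total x' a with hxa' | hxa'
              · rw [max_eq_right hxa']; linarith
              · rw [max_eq_left hxa']; linarith
            · rw [max_eq_left hxa, max_eq_left (hxa.trans hxx')]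
          linarith
      have hdistF : dist (F q) (F q') ≤ ε/2 := by
        rcases hqq' with h | h
        · have hqK := hK q hq.1 hq.2
          have hq'K := hK q' hq'mem.1 (hq'mem.2.trans (max_le_max hxx' le_rfl))
          exact (hδ q hqK q' hq'K (by rwa [Real.dist_eq])).le
        · rw [h, dist_self]; linarith
      calc infDist z (Img x) ≤ dist z (F q') := infDist_le_dist_of_mem (mem_image_of_mem _ hq'mem)
        _ ≤ dist z (F q) + dist (F q) (F q') := dist_triangle _ _ _
        _ ≤ infDist z (Img x') + ε/2 := by rw [← hweq]; linarith
    refine ⟨min δ₁ 1, lt_min hδ₁ one_pos, fun x hx => ?_⟩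
    have hx1 : dist x x₀ < 1 := lt_of_lt_of_le hx (min_le_right _ _)
    have hxδ : dist x x₀ < δ₁ := lt_of_lt_of_le hx (min_le_left _ _)
    rw [Real.dist_eq]
    rcases le_total x x₀ with h | h
    · have h1 : infDist z (Img x₀) ≤ infDist z (Img x) :=
        infDist_le_infDist_of_subset (hImgmono _ _ h) (hImgne x)
      have h2 : infDist z (Img x) ≤ infDist z (Img x₀) + ε/2 := by
        refine hstep x x₀ h hx1 (by simp) ?_
        have h' := abs_sub_lt_iff.1 (by rwa [Real.dist_eq] at hxδ)
        linarith [h'.1, h'.2]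
      rw [abs_sub_lt_iff]; constructor <;> linarith
    · have h1 : infDist z (Img x) ≤ infDist z (Img x₀) :=
        infDist_le_infDist_of_subset (hImgmono _ _ h) (hImgne x₀)
      have h2 : infDist z (Img x₀) ≤ infDist z (Img x) + ε/2 := by
        refine hstep x₀ x h (by simp) hx1 ?_
        have h' := abs_sub_lt_iff.1 (by rwa [Real.dist_eq] at hxδ)
        linarith [h'.1, h'.2]
      rw [abs_sub_lt_iff]; constructor <;> linarith
  -- the separating function Φ
  set w : ℕ → ℝ → ℝ := fun k x => min 1 (infDist (F (u k)) (Img x)) with hw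
  have hw0 : ∀ k x, 0 ≤ w k x := fun k x => le_min zero_le_one infDist_nonneg
  have hw1 : ∀ k x, w k x ≤ 1 := fun k x => min_le_left _ _
  have hwanti : ∀ k x x', x ≤ x' → w k x' ≤ w k x := fun k x x' h =>
    min_le_min le_rfl (infDist_le_infDist_of_subset (hImgmono _ _ h) (hImgne x))
  set Φ : ℝ → ℝ := fun x => ∑' k, (1/2:ℝ)^k * w k x with hΦ
  have hsumm : ∀ x, Summable (fun k => (1/2:ℝ)^k * w k x) := by
    intro x
    refine Summable.of_nonneg_of_le (fun k => mul_nonneg (by positivity) (hw0 k x))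
      (fun k => ?_) summable_geometric_two
    exact mul_le_of_le_one_right (by positivity) (hw1 k x)
  have hΦcont : Continuous Φ := by
    refine continuous_tsum (fun k => ?_) summable_geometric_two (fun k x => ?_)
    · exact continuous_const.mul (continuous_const.min ((hIcont (F (u k)))))
    · rw [Real.norm_eq_abs, abs_of_nonneg (mul_nonneg (by positivity) (hw0 k x))]
      exact mul_le_of_le_one_right (by positivity) (hw1 k x)
  have hΦanti : ∀ x x', x ≤ x' → Φ x' ≤ Φ x := fun x x' h =>
    Summable.tsum_le_tsum (fun k => mul_le_mul_of_nonneg_left (hwanti k x x' h) (by positivity))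
      (hsumm x') (hsumm x)
  -- Φ is constant exactly on the fibers of F
  have hIeq : ∀ x x', x ≤ x' → (∀ y, x ≤ y → y ≤ x' → F y = F x) → Img x' = Img x := by
    intro x x' h hconst
    refine Subset.antisymm ?_ (hImgmono _ _ h)
    rintro - ⟨q, hq, rfl⟩
    rcases le_total q (max x a) with hqx | hqx
    · exact mem_image_of_mem _ ⟨hq.1, hqx⟩
    · rcases le_total x' a with hh | hh
      · have hqa : q = a :=
          le_antisymm (hq.2.trans_eq (max_eq_right hh)) ((le_max_right x a).trans hqx)
        rw [hqa]
        exact mem_image_of_mem _ ⟨le_rfl, le_max_right _ _⟩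
      · have hq1 : x ≤ q := le_trans (le_max_left _ _) hqx
        have hq2 : q ≤ x' := hq.2.trans_eq (max_eq_left hh)
        rw [hconst q hq1 hq2]
        rcases le_total a x with hax | hax
        · exact mem_image_of_mem _ ⟨hax, le_max_left _ _⟩
        · rw [hla x hax]
          exact mem_image_of_mem _ ⟨le_rfl, le_max_right _ _⟩
  have hW1 : ∀ x x', x ≤ x' → F x = F x' → Φ x = Φ x' := by
    intro x x' h he
    have hIm : Img x' = Img x := hIeq x x' h (fun y h1 h2 => hP x y x' h1 h2 he)
    simp only [hΦ, hw, hIm]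
  -- strict decrease across distinct fibers
  have hstrict : ∀ x x', x < x' → F x ≠ F x' → Φ x' < Φ x := by
    intro x x' h hne'
    have hnotin : F x' ∉ Img x := by
      rintro ⟨q, hq, hFq⟩
      rcases le_total x a with hxa | hxa
      · have hq2 : q ≤ a := hq.2.trans_eq (max_eq_right hxa)
        exact hne' ((hla x hxa).trans ((hla q hq2).symm.trans hFq))
      · have hq2 : q ≤ x := hq.2.trans_eq (max_eq_left hxa)
        exact hne' ((hP q x x' hq2 h.le hFq).trans hFq)
    have hδpos : 0 < infDist (F x') (Img x) :=
      ((hImgcpt x).isClosed.notMem_iff_infDist_pos (hImgne x)).1 hnotin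
    set δ := min (infDist (F x') (Img x)) 1 with hδdef
    have hδpos' : 0 < δ := lt_min hδpos one_pos
    have hδ1 : δ ≤ 1 := min_le_right _ _
    have hδle : δ ≤ infDist (F x') (Img x) := min_le_left _ _
    have hopen : IsOpen (Ioo x x' ∩ F ⁻¹' (ball (F x') (δ/2))) :=
      isOpen_Ioo.inter (isOpen_ball.preimage hF)
    have hne2 : (Ioo x x' ∩ F ⁻¹' (ball (F x') (δ/2))).Nonempty := by
      have hx'cl : x' ∈ closure (Ioo x x') := by
        rw [closure_Ioo h.ne]; exact ⟨h.le, le_rfl⟩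
      have hnb : F ⁻¹' (ball (F x') (δ/2)) ∈ 𝓝 x' :=
        hF.continuousAt (ball_mem_nhds _ (by linarith))
      rcases mem_closure_iff_nhds.1 hx'cl _ hnb with ⟨y, hy1, hy2⟩
      exact ⟨y, hy2, hy1⟩
    obtain ⟨k, hk⟩ := hu.exists_mem_open hopen hne2
    obtain ⟨hkI, hkB⟩ := hk
    have hterm_x : δ/2 ≤ w k x := by
      have h1 := infDist_le_infDist_add_dist (x := F x') (y := F (u k)) (s := Img x)
      have h2 : dist (F x') (F (u k)) < δ/2 := by
        rw [dist_comm]; exact mem_ball.1 hkB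
      refine le_min (by linarith) (by linarith)
    have hterm_x' : w k x' = 0 := by
      have hmem : F (u k) ∈ Img x' := by
        rcases le_total (u k) a with hua | hua
        · rw [hla _ hua]; exact mem_image_of_mem _ ⟨le_rfl, le_max_right _ _⟩
        · exact hmemImg x' (u k) hua hkI.2.le
      have h0 : infDist (F (u k)) (Img x') = 0 := infDist_zero_of_mem hmem
      simp only [hw, h0, min_eq_right (zero_le_one (α := ℝ))]
    have hpow : (0:ℝ) < (1/2:ℝ)^k := by positivity
    have hhs : HasSum (fun j => if j = k then (1/2:ℝ)^k * (δ/2) else 0) ((1/2:ℝ)^k * (δ/2)) :=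
      hasSum_ite_eq k _
    have hptwise : ∀ j, (1/2:ℝ)^j * w j x' + (if j = k then (1/2:ℝ)^k * (δ/2) else 0) ≤
        (1/2:ℝ)^j * w j x := by
      intro j
      by_cases hj : j = k
      · subst hj
        rw [if_pos rfl, hterm_x', mul_zero, zero_add]
        exact mul_le_mul_of_nonneg_left hterm_x hpow.le
      · rw [if_neg hj, add_zero]
        exact mul_le_mul_of_nonneg_left (hwanti j x x' h.le) (by positivity)
    have hsum2 : Summable (fun j => (1/2:ℝ)^j * w j x' +
        (if j = k then (1/2:ℝ)^k * (δ/2) else 0)) := (hsumm x').add hhs.summable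
    have hle : Φ x' + (1/2:ℝ)^k * (δ/2) ≤ Φ x := by
      have := Summable.tsum_le_tsum hptwise hsum2 (hsumm x)
      rwa [Summable.tsum_add (hsumm x') hhs.summable, hhs.tsum_eq] at this
    nlinarith [hle, mul_pos hpow (by linarith : (0:ℝ) < δ/2)]
  have hW2 : ∀ x x', Φ x = Φ x' → F x = F x' := by
    intro x x' hΦeq
    rcases lt_trichotomy x x' with h | h | h
    · by_contra hne'
      exact (hstrict x x' h hne').ne hΦeq.symm
    · rw [h]
    · by_contra hne'
      exact (hstrict x' x h (fun hh => hne' hh.symm)).ne hΦeq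
  have hΦab : Φ b < Φ a := hstrict a b hab hne
  -- intermediate value
  have hsurj : ∀ v ∈ Icc (Φ b) (Φ a), ∃ x ∈ Icc a b, Φ x = v := by
    intro v hv
    have := intermediate_value_Icc' hab.le hΦcont.continuousOn
    rcases this hv with ⟨x, hx1, hx2⟩
    exact ⟨x, hx1, hx2⟩
  -- quotient construction
  set E := Icc (Φ b) (Φ a) with hE
  set Ψ : Icc a b → E := fun d => ⟨Φ d.1, ⟨hΦanti d.1 b d.2.2, hΦanti a d.1 d.2.1⟩⟩ with hΨ
  have hΨcont : Continuous Ψ := (hΦcont.comp continuous_subtype_val).subtype_mk _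
  have hΨsurj : Function.Surjective Ψ := by
    intro v
    obtain ⟨x, hx, hΦx⟩ := hsurj v.1 v.2
    exact ⟨⟨x, hx⟩, Subtype.ext hΦx⟩
  have hquot : IsQuotientMap Ψ := hΨcont.isClosedMap.isQuotientMap hΨcont hΨsurj
  set g₀ : E → M := fun v => F ((hΨsurj v).choose).1 with hg₀
  have hg₀Ψ : ∀ d : Icc a b, g₀ (Ψ d) = F d.1 := by
    intro d
    apply hW2
    have := (hΨsurj (Ψ d)).choose_spec
    exact congrArg Subtype.val this
  have hg₀cont : Continuous g₀ := by
    rw [hquot.continuous_iff]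
    have : g₀ ∘ Ψ = fun d : Icc a b => F d.1 := funext hg₀Ψ
    rw [this]
    exact hF.comp continuous_subtype_val
  have hg₀val : ∀ v, ∃ x, g₀ v = F x := fun v => ⟨_, rfl⟩
  have hΨval : ∀ d : Icc a b, (Ψ d).1 = Φ d.1 := fun d => rfl
  have hg₀inj : Function.Injective g₀ := by
    intro v v' hvv'
    have h1 := congrArg Subtype.val (hΨsurj v).choose_spec
    have h2 := congrArg Subtype.val (hΨsurj v').choose_spec
    have hΦeq : Φ ((hΨsurj v).choose).1 = Φ ((hΨsurj v').choose).1 := by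
      rcases le_total ((hΨsurj v).choose).1 ((hΨsurj v').choose).1 with h | h
      · exact hW1 _ _ h hvv'
      · exact (hW1 _ _ h hvv'.symm).symm
    apply Subtype.ext
    rw [← h1, ← h2]
    exact hΦeq
  -- affine reparametrization
  have hΔ : Φ b - Φ a ≠ 0 := sub_ne_zero.2 hΦab.ne
  have haffmem : ∀ s : Set.Icc (0:ℝ) 1, Φ a + s.1 * (Φ b - Φ a) ∈ E := by
    intro s
    constructor
    · have := mul_le_mul_of_nonpos_right s.2.2 (by linarith : Φ b - Φ a ≤ 0)
      simp only [one_mul] at this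
      linarith
    · have := mul_nonpos_of_nonneg_of_nonpos s.2.1 (by linarith : Φ b - Φ a ≤ 0)
      linarith
  set aff : Set.Icc (0:ℝ) 1 → E := fun s => ⟨Φ a + s.1 * (Φ b - Φ a), haffmem s⟩ with haff
  have haffcont : Continuous aff :=
    (continuous_const.add (continuous_subtype_val.mul continuous_const)).subtype_mk _
  have haffinj : Function.Injective aff := by
    intro s t hst
    have := congrArg Subtype.val hst
    simp only [haff] at this
    apply Subtype.ext
    have h2 : s.1 * (Φ b - Φ a) = t.1 * (Φ b - Φ a) := by linarith
    exact mul_right_cancel₀ hΔ h2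
  have hmema : a ∈ Icc a b := ⟨le_rfl, hab.le⟩
  have hmemb : b ∈ Icc a b := ⟨hab.le, le_rfl⟩
  have e0 : aff ⟨0, le_refl 0, zero_le_one⟩ = Ψ ⟨a, hmema⟩ := by
    apply Subtype.ext
    show Φ a + 0 * (Φ b - Φ a) = Φ a
    ring
  have e1 : aff ⟨1, zero_le_one, le_refl 1⟩ = Ψ ⟨b, hmemb⟩ := by
    apply Subtype.ext
    show Φ a + 1 * (Φ b - Φ a) = Φ b
    ring
  refine ⟨fun s => g₀ (aff s), hg₀cont.comp haffcont, hg₀inj.comp haffinj, ?_, ?_,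
    fun s => hg₀val _⟩
  · show g₀ (aff ⟨0, le_refl 0, zero_le_one⟩) = F a
    rw [e0, hg₀Ψ]
  · show g₀ (aff ⟨1, zero_le_one, le_refl 1⟩) = F b
    rw [e1, hg₀Ψ]





/-- The main construction: the arc through the Whitney level containing a prescribed
component of the intersection. -/
lemma main_arc [CompactSpace X] (μ : Hyperspace X → ℝ) (hμcont : Continuous μ)
    (hμmono : ∀ A B : Hyperspace X, carr A ⊂ carr B → μ A < μ B)
    (t : ℝ) (A B : Hyperspace X) (hA : μ A = t) (hB : μ B = t) (hAB : A ≠ B)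
    (K : Set X)
    (hK : ∃ x ∈ carr A ∩ carr B, K = connectedComponentIn (carr A ∩ carr B) x) :
    ∃ f : Set.Icc (0 : ℝ) 1 → Hyperspace X, Continuous f ∧ Function.Injective f ∧
      f ⟨0, le_refl 0, zero_le_one⟩ = A ∧ f ⟨1, zero_le_one, le_refl 1⟩ = B ∧
      ∀ s, μ (f s) = t ∧ carr (f s) ⊆ carr A ∪ carr B ∧ K ⊆ carr (f s) := by
  classical
  obtain ⟨x₀, hx₀, rfl⟩ := hK
  set I := carr A ∩ carr B with hI
  have hIc : IsCompact I := (carr_compact A).inter_right (carr_compact B).isClosed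
  set K := connectedComponentIn I x₀ with hKdef
  have hKconn : IsConnected K := isConnected_connectedComponentIn_iff.2 hx₀
  have hKsub : K ⊆ I := connectedComponentIn_subset I x₀
  have hKcpt : IsCompact K := by
    haveI : CompactSpace I := isCompact_iff_compactSpace.1 hIc
    rw [hKdef, connectedComponentIn_eq_image hx₀]
    exact isClosed_connectedComponent.isCompact.image continuous_subtype_val
  set Kh := Hmk K hKcpt hKconn with hKh
  have hcarrKh : carr Kh = K := rfl
  have hABne : carr A ≠ carr B := fun h => hAB (Hext h)
  have hKA : carr Kh ⊂ carr A := by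
    rw [hcarrKh]
    refine (hKsub.trans inter_subset_left).ssubset_of_ne (fun h => ?_)
    exact hABne (Subset.antisymm (h ▸ hKsub.trans inter_subset_right)
      (by
        have hsub : carr A ⊆ carr B := h ▸ hKsub.trans inter_subset_right
        exact fun x hx => (mu_eq μ hμmono hsub (hA.trans hB.symm)) ▸ hx))
  have hKB : carr Kh ⊂ carr B := by
    rw [hcarrKh]
    refine (hKsub.trans inter_subset_right).ssubset_of_ne (fun h => ?_)
    have hsub : carr B ⊆ carr A := h ▸ hKsub.trans inter_subset_left
    exact hAB (mu_eq μ hμmono hsub (hB.trans hA.symm)).symm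
  have hk0 : μ Kh < t := hA ▸ hμmono Kh A hKA
  -- order arcs
  obtain ⟨σ, hσcont, hσmono, hσμ, hσlow, hσhigh, hσbd⟩ :=
    exists_orderArc μ hμcont hμmono Kh A hKA
  obtain ⟨τ, hτcont, hτmono, hτμ, hτlow, hτhigh, hτbd⟩ :=
    exists_orderArc μ hμcont hμmono Kh B hKB
  have hσK : ∀ v, K ⊆ carr (σ v) := fun v => (hσbd v).1
  have hτK : ∀ v, K ⊆ carr (τ v) := fun v => (hτbd v).1
  have hx₀K : x₀ ∈ K := mem_connectedComponentIn hx₀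
  -- the two-parameter union
  have hNconn : ∀ p : ℝ × ℝ, IsConnected (((σ p.1).1 ⊔ (τ p.2).1 : NonemptyCompacts X) : Set X) := by
    intro p
    rw [NonemptyCompacts.coe_sup]
    exact IsConnected.union ⟨x₀, hσK p.1 hx₀K, hτK p.2 hx₀K⟩ (carr_conn _) (carr_conn _)
  set W : ℝ × ℝ → Hyperspace X := fun p => ⟨(σ p.1).1 ⊔ (τ p.2).1, hNconn p⟩ with hW
  have hcarrW : ∀ p, carr (W p) = carr (σ p.1) ∪ carr (τ p.2) := fun p =>
    NonemptyCompacts.coe_sup _ _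
  have hWcont : Continuous W := by
    rw [Metric.continuous_iff]
    intro p ε hε
    obtain ⟨δ₁, hδ₁, h₁⟩ := Metric.continuous_iff.1 hσcont p.1 ε hε
    obtain ⟨δ₂, hδ₂, h₂⟩ := Metric.continuous_iff.1 hτcont p.2 ε hε
    refine ⟨min δ₁ δ₂, lt_min hδ₁ hδ₂, fun q hq => ?_⟩
    have hq1 : dist q.1 p.1 < δ₁ :=
      lt_of_le_of_lt (le_trans (le_max_left _ _) (le_of_eq Prod.dist_eq.symm))
        (lt_of_lt_of_le hq (min_le_left _ _))
    have hq2 : dist q.2 p.2 < δ₂ :=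
      lt_of_le_of_lt (le_trans (le_max_right _ _) (le_of_eq Prod.dist_eq.symm))
        (lt_of_lt_of_le hq (min_le_right _ _))
    have hb := hausdorffDist_union_le (carr_ne (σ q.1)) (carr_ne (τ q.2))
      (carr_ne (σ p.1)) (carr_ne (τ p.2)) (carr_compact _).isBounded
      (carr_compact _).isBounded (carr_compact _).isBounded (carr_compact _).isBounded
    rw [hyper_dist, hcarrW, hcarrW]
    refine lt_of_le_of_lt hb (max_lt ?_ ?_)
    · rw [← hyper_dist]; exact h₁ q.1 hq1
    · rw [← hyper_dist]; exact h₂ q.2 hq2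
  set g : ℝ × ℝ → ℝ := fun p => μ (W p) with hg
  have hgcont : Continuous g := hμcont.comp hWcont
  have hgmono : ∀ p q : ℝ × ℝ, p.1 ≤ q.1 → p.2 ≤ q.2 → g p ≤ g q := by
    intro p q h1 h2
    refine mu_mono μ hμmono ?_
    rw [hcarrW, hcarrW]
    exact union_subset_union (hσmono _ _ h1) (hτmono _ _ h2)
  -- the crossing function
  set S : ℝ → Set ℝ := fun c => {v | t ≤ g (v, v - c)} with hS
  have hWAB : ∀ c, W (max t (c + t), max t (c + t) - c) = W (max t (c+t), max t (c+t) - c) := fun _ => rfl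
  have hSne : ∀ c, (max t (c + t)) ∈ S c := by
    intro c
    have h1 : carr A ⊆ carr (W (max t (c + t), max t (c + t) - c)) := by
      rw [hcarrW, hσhigh _ (hA.symm ▸ le_max_left _ _)]
      exact subset_union_left
    have := mu_mono μ hμmono h1
    rw [hA] at this
    exact this
  have hSbdd : ∀ c, BddBelow (S c) := by
    intro c
    refine ⟨min (μ Kh) (c + μ Kh), fun v hv => ?_⟩
    by_contra hlt
    push_neg at hlt
    have hv1 : v ≤ μ Kh := le_of_lt (lt_of_lt_of_le hlt (min_le_left _ _))
    have hv2 : v - c ≤ μ Kh := by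
      have := lt_of_lt_of_le hlt (min_le_right _ _); linarith
    have hWv : W (v, v - c) = Kh := by
      apply Hext
      rw [hcarrW, hσlow _ hv1, hτlow _ hv2, hcarrKh, union_self]
    have : g (v, v - c) < t := by rw [hg]; simp only; rw [hWv]; exact hk0
    exact absurd hv (by simp only [hS, mem_setOf_eq]; linarith)
  set h : ℝ → ℝ := fun c => sInf (S c) with hh
  have hScl : ∀ c, IsClosed (S c) := by
    intro c
    have : Continuous fun v : ℝ => g (v, v - c) :=
      hgcont.comp (continuous_id.prodMk (continuous_id.sub continuous_const))
    exact isClosed_le continuous_const this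
  have hhmem : ∀ c, h c ∈ S c := fun c =>
    (hScl c).csInf_mem ⟨_, hSne c⟩ (hSbdd c)
  have hφcont : ∀ c : ℝ, Continuous fun v : ℝ => g (v, v - c) := fun c =>
    hgcont.comp (continuous_id.prodMk (continuous_id.sub continuous_const))
  have hglev : ∀ c, g (h c, h c - c) = t := by
    intro c
    refine le_antisymm ?_ (hhmem c)
    have h1 : Tendsto (fun n : ℕ => h c - 1/(n+1)) atTop (𝓝 (h c)) := by
      have h2 := (tendsto_const_nhds : Tendsto (fun _ : ℕ => h c) atTop
        (𝓝 (h c))).sub tendsto_one_div_add_atTop_nhds_zero_nat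
      simpa using h2
    have hlim : Tendsto (fun n : ℕ => g (h c - 1/(n+1), h c - 1/(n+1) - c)) atTop
        (𝓝 (g (h c, h c - c))) := ((hφcont c).tendsto (h c)).comp h1
    refine le_of_tendsto hlim (Eventually.of_forall fun n => ?_)
    have hvlt : h c - 1/(n+1) < h c := by
      have : (0:ℝ) < 1/(n+1) := by positivity
      linarith
    have := notMem_of_lt_csInf hvlt (hSbdd c)
    simp only [hS, mem_setOf_eq, not_le] at this
    exact this.le
  -- h is monotone and 1-Lipschitz
  have hhmono : ∀ c c', c ≤ c' → h c ≤ h c' := by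
    intro c c' hcc'
    refine csInf_le_csInf (hSbdd c) ⟨_, hSne c'⟩ (fun v hv => ?_)
    simp only [hS, mem_setOf_eq] at hv ⊢
    exact le_trans hv (hgmono (v, v - c') (v, v - c) le_rfl (by show v - c' ≤ v - c; linarith))
  have hhlip : ∀ c c', c ≤ c' → h c' ≤ h c + (c' - c) := by
    intro c c' hcc'
    have hmem : h c + (c' - c) ∈ S c' := by
      simp only [hS, mem_setOf_eq]
      have := hhmem c
      simp only [hS, mem_setOf_eq] at this
      exact le_trans this (hgmono (h c, h c - c) (h c + (c' - c), h c + (c' - c) - c')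
        (by show h c ≤ h c + (c' - c); linarith)
        (by show h c - c ≤ h c + (c' - c) - c'; linarith))
    exact csInf_le (hSbdd c') hmem
  have hhcont : Continuous h := by
    rw [Metric.continuous_iff]
    intro c₀ ε hε
    refine ⟨ε, hε, fun c hc => ?_⟩
    rw [Real.dist_eq] at hc ⊢
    rcases le_total c c₀ with hle | hle
    · have h1 := hhmono c c₀ hle
      have h2 := hhlip c c₀ hle
      have h3 := abs_sub_lt_iff.1 hc
      rw [abs_sub_lt_iff]
      constructor <;> linarith [h3.1, h3.2]
    · have h1 := hhmono c₀ c hle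
      have h2 := hhlip c₀ c hle
      have h3 := abs_sub_lt_iff.1 hc
      rw [abs_sub_lt_iff]
      constructor <;> linarith [h3.1, h3.2]
  -- the level path
  set F : ℝ → Hyperspace X := fun c => W (h c, h c - c) with hF
  have hFcont : Continuous F :=
    hWcont.comp (hhcont.prodMk (hhcont.sub continuous_id))
  have hFμ : ∀ c, μ (F c) = t := hglev
  have hcarrF : ∀ c, carr (F c) = carr (σ (h c)) ∪ carr (τ (h c - c)) := fun c => hcarrW _
  have hFsub : ∀ c, carr (F c) ⊆ carr A ∪ carr B := by
    intro c
    rw [hcarrF]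
    exact union_subset_union (hσbd _).2 (hτbd _).2
  have hFK : ∀ c, K ⊆ carr (F c) := fun c => (hσK _).trans
    (by rw [hcarrF]; exact subset_union_left)
  -- endpoint values
  have hendA : ∀ c, t - μ Kh ≤ c → F c = A := by
    intro c hcge
    have hhc : h c = t := by
      refine le_antisymm (csInf_le (hSbdd c) ?_) ?_
      · simp only [hS, mem_setOf_eq]
        have hτt : τ (t - c) = Kh := hτlow _ (by linarith)
        have hcW : carr A ⊆ carr (W (t, t - c)) := by
          rw [hcarrW, hσhigh _ hA.le]
          exact subset_union_left
        have := mu_mono μ hμmono hcW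
        rw [hA] at this
        exact this
      · by_contra hlt
        push_neg at hlt
        have hmem := hhmem c
        simp only [hS, mem_setOf_eq] at hmem
        have hτKh : τ (h c - c) = Kh := hτlow _ (by linarith)
        have hWσ : carr (W (h c, h c - c)) = carr (σ (h c)) := by
          rw [hcarrW, hτKh, hcarrKh, union_eq_self_of_subset_right (hσK _)]
        have hμσ : μ (σ (h c)) < t := by
          rcases le_total (h c) (μ Kh) with hcase | hcase
          · rw [hσlow _ hcase]; exact hk0
          · rw [hσμ _ hcase (by linarith [hA])]
            · exact hlt
        have : μ (W (h c, h c - c)) = μ (σ (h c)) :=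
          congrArg μ (Hext hWσ)
        rw [hg] at hmem
        simp only at hmem
        rw [this] at hmem
        linarith
    apply Hext
    rw [hcarrF, hhc, hσhigh _ hA.le, hτlow _ (by linarith), hcarrKh]
    exact union_eq_self_of_subset_right (hKA.1)
  have hendB : ∀ c, c ≤ -(t - μ Kh) → F c = B := by
    intro c hcle
    have hhc : h c = c + t := by
      refine le_antisymm (csInf_le (hSbdd c) ?_) ?_
      · simp only [hS, mem_setOf_eq]
        have hσKh : σ (c + t) = Kh := hσlow _ (by linarith)
        have hcW : carr B ⊆ carr (W (c + t, c + t - c)) := by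
          rw [hcarrW]
          have : c + t - c = t := by ring
          rw [this, hτhigh _ hB.le]
          exact subset_union_right
        have := mu_mono μ hμmono hcW
        rw [hB] at this
        exact this
      · by_contra hlt
        push_neg at hlt
        have hmem := hhmem c
        simp only [hS, mem_setOf_eq] at hmem
        have hσKh : σ (h c) = Kh := hσlow _ (by linarith)
        have hWτ : carr (W (h c, h c - c)) = carr (τ (h c - c)) := by
          rw [hcarrW, hσKh, hcarrKh, union_eq_self_of_subset_left (hτK _)]
        have hμτ : μ (τ (h c - c)) < t := by
          rcases le_total (h c - c) (μ Kh) with hcase | hcase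
          · rw [hτlow _ hcase]; exact hk0
          · rw [hτμ _ hcase (by linarith [hB])]
            · linarith
        have : μ (W (h c, h c - c)) = μ (τ (h c - c)) :=
          congrArg μ (Hext hWτ)
        rw [hg] at hmem
        simp only at hmem
        rw [this] at hmem
        linarith
    apply Hext
    rw [hcarrF, hhc]
    have : c + t - c = t := by ring
    rw [this, hτhigh _ hB.le, hσlow _ (by linarith), hcarrKh]
    exact union_eq_self_of_subset_left (hKB.1)
  -- constancy property
  have hprop : ∀ c y c' : ℝ, c ≤ y → y ≤ c' → F c = F c' → F y = F c := by
    intro c y c' h1 h2 hFeq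
    have ha1 : h c ≤ h y := hhmono _ _ h1
    have ha2 : h y ≤ h c' := hhmono _ _ h2
    have hb1 : h y - y ≤ h c - c := by have := hhlip c y h1; linarith
    have hb2 : h c' - c' ≤ h y - y := by have := hhlip y c' h2; linarith
    have hsub : carr (F y) ⊆ carr (F c) := by
      rw [hcarrF, hcarrF]
      have hs1 : carr (σ (h y)) ⊆ carr (σ (h c')) := hσmono _ _ ha2
      have hs2 : carr (τ (h y - y)) ⊆ carr (τ (h c - c)) := hτmono _ _ hb1
      have hs1' : carr (σ (h c')) ⊆ carr (F c') := by
        rw [hcarrF]; exact subset_union_left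
      rw [← hFeq] at hs1'
      rw [hcarrF] at hs1'
      exact union_subset (hs1.trans hs1') (hs2.trans subset_union_right)
    exact mu_eq μ hμmono hsub (by rw [hFμ, hFμ])
  -- collapse to an arc
  have hk0' : μ Kh - t < t - μ Kh := by linarith
  obtain ⟨f, hfcont, hfinj, hf0, hf1, hfval⟩ :=
    collapse (fun c => F (-c)) (hFcont.comp continuous_neg) (μ Kh - t) (t - μ Kh) hk0'
      (fun x hx => by
        show F (-x) = F (-(μ Kh - t))
        have h1 : F (-x) = A := hendA _ (by linarith)
        have h2 : F (-(μ Kh - t)) = A := hendA _ (by linarith)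
        rw [h1, h2])
      (fun x y z hxy hyz hxz => by
        have h' : F (-y) = F (-z) := hprop (-z) (-y) (-x) (by linarith) (by linarith) hxz.symm
        exact h'.trans hxz.symm)
      (by
        show F (-(μ Kh - t)) ≠ F (-(t - μ Kh))
        have h1 : F (-(μ Kh - t)) = A := hendA _ (by linarith)
        have h2 : F (-(t - μ Kh)) = B := hendB _ (by linarith)
        rw [h1, h2]; exact hAB)
  refine ⟨f, hfcont, hfinj, ?_, ?_, ?_⟩
  · rw [hf0]; exact hendA (-(μ Kh - t)) (by linarith)
  · rw [hf1]; exact hendB (-(t - μ Kh)) (by linarith)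
  · intro s
    obtain ⟨x, hx⟩ := hfval s
    rw [hx]
    exact ⟨hFμ _, hFsub _, hFK _⟩


end WhitneyArcAux

/-- Lemma 14.8.1 of Nadler: for distinct intersecting elements `A, B` of a Whitney level
`μ⁻¹(t)`, there is an arc in `μ⁻¹(t)` from `A` to `B` all of whose elements lie in
`A ∪ B`; moreover, for any prescribed connected component `K` of `A ∩ B` the arc can be
chosen so that every element of it contains `K`. -/
theorem whitney_level_arc (X : Type*) [MetricSpace X] [CompactSpace X] [ConnectedSpace X]
    (μ : Hyperspace X → ℝ) (hμcont : Continuous μ)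
    (hμ0 : ∀ A : Hyperspace X, (A.1 : Set X).Subsingleton → μ A = 0)
    (hμmono : ∀ A B : Hyperspace X, (A.1 : Set X) ⊂ (B.1 : Set X) → μ A < μ B)
    (t : ℝ) (ht0 : 0 < t)
    (httop : t < μ ⟨⟨⟨Set.univ, isCompact_univ⟩, Set.univ_nonempty⟩, isConnected_univ⟩)
    (A B : Hyperspace X) (hA : μ A = t) (hB : μ B = t) (hAB : A ≠ B)
    (hmeet : ((A.1 : Set X) ∩ (B.1 : Set X)).Nonempty) :
    (∃ f : Set.Icc (0 : ℝ) 1 → Hyperspace X, Continuous f ∧ Function.Injective f ∧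
      f ⟨0, le_refl 0, zero_le_one⟩ = A ∧ f ⟨1, zero_le_one, le_refl 1⟩ = B ∧
      ∀ s, μ (f s) = t ∧ ((f s).1 : Set X) ⊆ (A.1 : Set X) ∪ (B.1 : Set X)) ∧
    (∀ K : Set X,
      (∃ x ∈ (A.1 : Set X) ∩ (B.1 : Set X),
          K = connectedComponentIn ((A.1 : Set X) ∩ (B.1 : Set X)) x) →
      ∃ f : Set.Icc (0 : ℝ) 1 → Hyperspace X, Continuous f ∧ Function.Injective f ∧
        f ⟨0, le_refl 0, zero_le_one⟩ = A ∧ f ⟨1, zero_le_one, le_refl 1⟩ = B ∧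
        ∀ s, μ (f s) = t ∧ ((f s).1 : Set X) ⊆ (A.1 : Set X) ∪ (B.1 : Set X) ∧
          K ⊆ ((f s).1 : Set X)) := by
  constructor
  · obtain ⟨x₀, hx₀⟩ := hmeet
    obtain ⟨f, hfc, hfi, hf0, hf1, hfprop⟩ :=
      WhitneyArcAux.main_arc μ hμcont hμmono t A B hA hB hAB
        (connectedComponentIn ((A.1 : Set X) ∩ (B.1 : Set X)) x₀) ⟨x₀, hx₀, rfl⟩
    exact ⟨f, hfc, hfi, hf0, hf1, fun s => ⟨(hfprop s).1, (hfprop s).2.1⟩⟩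
  · intro K hK
    exact WhitneyArcAux.main_arc μ hμcont hμmono t A B hA hB hAB K hK
end

section
/- Being Wilder is a Whitney property: if X is a Wilder continuum, μ : C(X) → [0, μ(X)] is a Whitney map, and t ∈ (0, μ(X)), then the Whitney level μ⁻¹(t), regarded as a subspace of C(X) with the Hausdorff metric, is a Wilder continuum. -/
open TopologicalSpace

/-- A topological space is *Wilder* if for any three distinct points `x, y, z` there is a
compact connected subset containing `x` and exactly one of `y` and `z`. -/
def WilderSpace (X : Type*) [TopologicalSpace X] : Prop :=
  ∀ x y z : X, x ≠ y → y ≠ z → x ≠ z →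
    ∃ C : Set X, IsCompact C ∧ IsConnected C ∧ x ∈ C ∧ Xor' (y ∈ C) (z ∈ C)

open Metric Set

set_option linter.unusedSectionVars false
set_option linter.unusedVariables false
set_option maxHeartbeats 1600000

namespace WilderAux
variable {X : Type*} [MetricSpace X] [CompactSpace X]

/-- subcontinuum predicate -/
def Sc (s : Set X) : Prop := s.Nonempty ∧ IsCompact s ∧ IsPreconnected s

def mk (s : Set X) (h : Sc s) : Hyperspace X :=
  ⟨⟨⟨s, h.2.1⟩, h.1⟩, h.1, h.2.2⟩

@[simp] lemma mk_coe (s : Set X) (h : Sc s) : ((mk s h).1 : Set X) = s := rfl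

lemma sc_coe (A : Hyperspace X) : Sc (A.1 : Set X) :=
  ⟨A.1.nonempty, A.1.isCompact, A.2.2⟩

lemma hyper_ext {A B : Hyperspace X} (h : (A.1 : Set X) = (B.1 : Set X)) : A = B := by
  apply Subtype.ext
  exact NonemptyCompacts.ext h

lemma mk_coe_self (A : Hyperspace X) : mk (A.1 : Set X) (sc_coe A) = A := by
  apply hyper_ext; rfl

lemma hne_top {s u : Set X} (hs : s.Nonempty) (hu : u.Nonempty) :
    EMetric.hausdorffEdist s u ≠ ⊤ :=
  hausdorffEdist_ne_top_of_nonempty_of_bounded hs hu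
    (isCompact_univ.isBounded.subset (subset_univ _))
    (isCompact_univ.isBounded.subset (subset_univ _))

lemma infDist_le_hd {s u : Set X} {x : X} (hx : x ∈ s) (hs : s.Nonempty) (hu : u.Nonempty) :
    infDist x u ≤ hausdorffDist s u :=
  infDist_le_hausdorffDist_of_mem hx (hne_top hs hu)

lemma mem_of_infDist_le_zero {s : Set X} (hs : IsClosed s) (hsn : s.Nonempty) {x : X}
    (h : infDist x s ≤ 0) : x ∈ s := by
  rw [hs.mem_iff_infDist_zero hsn]
  exact le_antisymm h infDist_nonneg

lemma distH (A B : Hyperspace X) : dist A B = hausdorffDist (A.1 : Set X) (B.1 : Set X) := by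
  rw [Subtype.dist_eq, NonemptyCompacts.dist_eq]

/-- closedness of the preconnectedness condition in `NonemptyCompacts` -/
lemma isClosed_preconn : IsClosed {K : NonemptyCompacts X | IsPreconnected (K : Set X)} := by
  refine IsSeqClosed.isClosed ?_
  intro A L hA hL
  rw [Metric.tendsto_atTop] at hL
  rintro U V hU hV hcov ⟨x, hxL, hxU⟩ ⟨y, hyL, hyV⟩
  by_contra hempty
  rw [Set.not_nonempty_iff_eq_empty] at hempty
  set P : Set X := (L : Set X) \ V with hP
  set Q : Set X := (L : Set X) \ U with hQ
  have hPc : IsCompact P := L.isCompact.diff hV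
  have hQc : IsCompact Q := L.isCompact.diff hU
  have hPn : P.Nonempty := ⟨x, hxL, fun hxV => by
    have : x ∈ (L : Set X) ∩ (U ∩ V) := ⟨hxL, hxU, hxV⟩
    rw [hempty] at this; exact this⟩
  have hQn : Q.Nonempty := ⟨y, hyL, fun hyU => by
    have : y ∈ (L : Set X) ∩ (U ∩ V) := ⟨hyL, hyU, hyV⟩
    rw [hempty] at this; exact this⟩
  have hdisj : Disjoint P Q := by
    rw [Set.disjoint_left]
    rintro a ⟨haL, haV⟩ ⟨-, haU⟩
    rcases hcov haL with h | h
    exacts [haU h, haV h]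
  obtain ⟨δ, hδ, hdisj2⟩ := hdisj.exists_thickenings hPc hQc.isClosed
  obtain ⟨n, hn⟩ := hL δ hδ
  have hdist : dist (A n) L < δ := hn n le_rfl
  rw [NonemptyCompacts.dist_eq] at hdist
  have hcovP : ∀ a ∈ (A n : Set X), a ∈ thickening δ P ∪ thickening δ Q := by
    intro a ha
    have h1 : infDist a (L : Set X) < δ :=
      lt_of_le_of_lt (infDist_le_hd ha (A n).nonempty L.nonempty) hdist
    obtain ⟨z, hzL, hz⟩ := (infDist_lt_iff L.nonempty).1 h1
    have hzPQ : z ∈ P ∪ Q := by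
      rcases hcov hzL with h | h
      · refine Or.inl ⟨hzL, fun hzV => ?_⟩
        have : z ∈ (L : Set X) ∩ (U ∩ V) := ⟨hzL, h, hzV⟩
        rw [hempty] at this; exact this
      · refine Or.inr ⟨hzL, fun hzU => ?_⟩
        have : z ∈ (L : Set X) ∩ (U ∩ V) := ⟨hzL, hzU, h⟩
        rw [hempty] at this; exact this
    rcases hzPQ with h | h
    · exact Or.inl (mem_thickening_iff.2 ⟨z, h, hz⟩)
    · exact Or.inr (mem_thickening_iff.2 ⟨z, h, hz⟩)
  have hmeet : ∀ (S : Set X), S.Nonempty → IsCompact S → S ⊆ (L : Set X) →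
      ((A n : Set X) ∩ thickening δ S).Nonempty := by
    rintro S ⟨z, hz⟩ hSc hSL
    have h1 : infDist z (A n : Set X) < δ := by
      have := infDist_le_hd (hSL hz) L.nonempty (A n).nonempty
      rw [hausdorffDist_comm] at this
      exact lt_of_le_of_lt this hdist
    obtain ⟨a, haA, haz⟩ := (infDist_lt_iff (A n).nonempty).1 h1
    exact ⟨a, haA, mem_thickening_iff.2 ⟨z, hz, by rwa [dist_comm]⟩⟩
  have hAn : IsPreconnected (A n : Set X) := hA n
  have := hAn (thickening δ P) (thickening δ Q) isOpen_thickening isOpen_thickening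
    hcovP (hmeet P hPn hPc (diff_subset)) (hmeet Q hQn hQc (diff_subset))
  obtain ⟨a, -, haP, haQ⟩ := this
  exact (Set.disjoint_left.1 hdisj2) haP haQ

lemma compactSpace_hyper : CompactSpace (Hyperspace X) := by
  have h1 : IsCompact {K : NonemptyCompacts X | IsConnected (K : Set X)} := by
    have : {K : NonemptyCompacts X | IsConnected (K : Set X)}
        = {K : NonemptyCompacts X | IsPreconnected (K : Set X)} := by
      ext K; exact ⟨fun h => h.2, fun h => ⟨K.nonempty, h⟩⟩
    rw [this]
    exact isClosed_preconn.isCompact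
  exact isCompact_iff_compactSpace.mp h1


/-- Boundary bumping: grow a proper subcontinuum slightly. -/
lemma bump {A C₀ : Set X} (hA : Sc A) (hC : Sc C₀) (hsub : C₀ ⊆ A)
    {δ : ℝ} (hδ : 0 < δ) (hfar : ∃ a ∈ A, δ < infDist a C₀) :
    ∃ A', Sc A' ∧ C₀ ⊆ A' ∧ A' ⊆ A ∧ (∀ y ∈ A', infDist y C₀ ≤ δ) ∧
      ∃ y ∈ A', infDist y C₀ = δ := by
  classical
  set K : Set X := A ∩ {x | infDist x C₀ ≤ δ} with hK
  have hKclosed : IsClosed K :=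
    hA.2.1.isClosed.inter (isClosed_le (continuous_infDist_pt C₀) continuous_const)
  have hKc : IsCompact K := hA.2.1.inter_right
    (isClosed_le (continuous_infDist_pt C₀) continuous_const)
  obtain ⟨z, hz⟩ := hC.1
  have hzK : z ∈ K := ⟨hsub hz, by
    simp only [mem_setOf_eq, infDist_zero_of_mem hz]; exact le_of_lt hδ⟩
  haveI : CompactSpace ↥K := isCompact_iff_compactSpace.mp hKc
  set zp : ↥K := ⟨z, hzK⟩ with hzp
  set comp : Set ↥K := connectedComponent zp with hcomp
  have hCK : C₀ ⊆ K := fun x hx => ⟨hsub hx, by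
    simp only [mem_setOf_eq, infDist_zero_of_mem hx]; exact le_of_lt hδ⟩
  have hSpre : IsPreconnected ((Subtype.val : ↥K → X) ⁻¹' C₀) := by
    have himg : (Subtype.val : ↥K → X) '' ((Subtype.val : ↥K → X) ⁻¹' C₀) = C₀ := by
      rw [Subtype.image_preimage_coe, inter_eq_self_of_subset_right hCK]
    have := (Topology.IsInducing.subtypeVal :
        Topology.IsInducing (Subtype.val : ↥K → X)).isPreconnected_image
      (s := (Subtype.val : ↥K → X) ⁻¹' C₀)
    rw [himg] at this
    exact this.mp hC.2.2
  have hScomp : (Subtype.val : ↥K → X) ⁻¹' C₀ ⊆ comp :=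
    hSpre.subset_connectedComponent (by exact hz)
  set A' : Set X := Subtype.val '' comp with hA'
  have hcompclosed : IsClosed comp := isClosed_connectedComponent
  have hcompc : IsCompact comp := hcompclosed.isCompact
  have hA'c : IsCompact A' := hcompc.image continuous_subtype_val
  have hA'pre : IsPreconnected A' :=
    isPreconnected_connectedComponent.image _ continuous_subtype_val.continuousOn
  have hA'K : A' ⊆ K := by rintro x ⟨v, -, rfl⟩; exact v.2
  have hCA' : C₀ ⊆ A' := by
    intro x hx
    exact ⟨⟨x, hCK hx⟩, hScomp hx, rfl⟩
  refine ⟨A', ⟨⟨z, hCA' hz⟩, hA'c, hA'pre⟩, hCA', fun x hx => (hA'K hx).1,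
    fun y hy => (hA'K hy).2, ?_⟩
  by_contra hno
  push_neg at hno
  -- D : points of K at distance exactly δ
  set D : Set ↥K := {x : ↥K | infDist (x : X) C₀ = δ} with hD
  have hDclosed : IsClosed D :=
    isClosed_eq ((continuous_infDist_pt C₀).comp continuous_subtype_val) continuous_const
  have hDc : IsCompact D := hDclosed.isCompact
  have hDcomp : D ∩ ⋂ (Z : {s : Set ↥K // IsClopen s ∧ zp ∈ s}), (Z : Set ↥K) = ∅ := by
    rw [← connectedComponent_eq_iInter_isClopen zp]
    rw [eq_empty_iff_forall_notMem]
    rintro x ⟨hxD, hxcomp⟩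
    exact hno x ⟨x, hxcomp, rfl⟩ hxD
  obtain ⟨u, hu⟩ := hDc.elim_finite_subfamily_closed _
    (fun Z : {s : Set ↥K // IsClopen s ∧ zp ∈ s} => Z.2.1.isClosed) hDcomp
  set V : Set ↥K := ⋂ Z ∈ u, (Z : Set ↥K) with hV
  have hVclopen : IsClopen V := isClopen_biInter_finset fun Z _ => Z.2.1
  have hzV : zp ∈ V := mem_iInter₂.2 fun Z _ => Z.2.2
  have hcompV : comp ⊆ V := by
    rw [hcomp, connectedComponent_eq_iInter_isClopen zp]
    intro x hx
    exact mem_iInter₂.2 fun Z _ => (mem_iInter.1 hx) Z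
  have hDV : D ∩ V = ∅ := hu
  -- push V down to X
  obtain ⟨O, hO, hVO⟩ := isOpen_induced_iff.mp hVclopen.isOpen
  set W : Set X := Subtype.val '' V with hW
  have hWclosed : IsClosed W := (hVclopen.isClosed.isCompact.image continuous_subtype_val).isClosed
  have hWK : W ⊆ K := by rintro x ⟨v, -, rfl⟩; exact v.2
  have hWlt : ∀ x ∈ W, infDist x C₀ < δ := by
    rintro x ⟨v, hvV, rfl⟩
    rcases lt_or_eq_of_le (show infDist (v : X) C₀ ≤ δ from v.2.2) with h | h
    · exact h
    · exfalso
      have : v ∈ D ∩ V := ⟨h, hvV⟩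
      rw [hDV] at this; exact this
  set O' : Set X := O ∩ {x | infDist x C₀ < δ} with hO'
  have hO'open : IsOpen O' := hO.inter (isOpen_lt (continuous_infDist_pt C₀) continuous_const)
  have hWeq : W = A ∩ O' := by
    apply Subset.antisymm
    · rintro x hx
      have hxlt := hWlt _ hx
      obtain ⟨v, hvV, rfl⟩ := hx
      refine ⟨v.2.1, ?_, hxlt⟩
      have : v ∈ Subtype.val ⁻¹' O := hVO ▸ hvV
      exact this
    · rintro x ⟨hxA, hxO, hxlt⟩
      have hxK : x ∈ K := ⟨hxA, show infDist x C₀ ≤ δ from le_of_lt hxlt⟩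
      refine ⟨⟨x, hxK⟩, ?_, rfl⟩
      rw [← hVO]; exact hxO
  have hAWclosed : IsClosed (A \ W) := by
    rw [hWeq, diff_self_inter]
    exact hA.2.1.isClosed.sdiff hO'open
  obtain ⟨a, haA, hafar⟩ := hfar
  have hcontr := (isPreconnected_closed_iff.1 hA.2.2) W (A \ W) hWclosed hAWclosed
    (fun x hx => by by_cases h : x ∈ W; exacts [Or.inl h, Or.inr ⟨hx, h⟩])
    ⟨z, hsub hz, ⟨zp, hzV, rfl⟩⟩
    ⟨a, haA, haA, fun haW => absurd ((hWK haW).2 : infDist a C₀ ≤ δ) (not_le.2 hafar)⟩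
  obtain ⟨w, -, hw1, -, hw2⟩ := hcontr
  exact hw2 hw1


/-- Hausdorff bound from one-sided pointwise bound plus containment. -/
lemma hd_of_pointwise {s u : Set X} (hsub : s ⊆ u) (hs : s.Nonempty) {η : ℝ} (hη : 0 ≤ η)
    (h : ∀ y ∈ u, infDist y s ≤ η) : hausdorffDist u s ≤ η :=
  hausdorffDist_le_of_infDist hη h
    (fun x hx => le_trans (by rw [infDist_zero_of_mem (hsub hx)]; exact hη) le_rfl)

open Classical in
noncomputable def muS (μ : Hyperspace X → ℝ) (s : Set X) : ℝ :=
  if h : Sc s then μ (mk s h) else 0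

section Mu
variable (μ : Hyperspace X → ℝ)

lemma muS_eq {s : Set X} (h : Sc s) : muS μ s = μ (mk s h) := by rw [muS, dif_pos h]

lemma muS_coe (A : Hyperspace X) : muS μ (A.1 : Set X) = μ A := by
  rw [muS_eq μ (sc_coe A), mk_coe_self]

variable {μ}

lemma muS_mono (hμmono : ∀ A B : Hyperspace X, (A.1 : Set X) ⊂ (B.1 : Set X) → μ A < μ B)
    {s u : Set X} (hs : Sc s) (hu : Sc u) (h : s ⊆ u) : muS μ s ≤ muS μ u := by
  rcases eq_or_ne s u with rfl | hne
  · exact le_rfl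
  · rw [muS_eq μ hs, muS_eq μ hu]
    exact (hμmono (mk s hs) (mk u hu) (ssubset_of_subset_of_ne h hne)).le

lemma muS_strict (hμmono : ∀ A B : Hyperspace X, (A.1 : Set X) ⊂ (B.1 : Set X) → μ A < μ B)
    {s u : Set X} (hs : Sc s) (hu : Sc u) (h : s ⊆ u) (hne : s ≠ u) : muS μ s < muS μ u := by
  rw [muS_eq μ hs, muS_eq μ hu]
  exact hμmono (mk s hs) (mk u hu) (ssubset_of_subset_of_ne h hne)

lemma eq_of_muS (hμmono : ∀ A B : Hyperspace X, (A.1 : Set X) ⊂ (B.1 : Set X) → μ A < μ B)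
    {s u : Set X} (hs : Sc s) (hu : Sc u) (h : s ⊆ u) (he : muS μ s = muS μ u) : s = u := by
  by_contra hne
  exact absurd he (ne_of_lt (muS_strict hμmono hs hu h hne))

/-- metric form of continuity of μ -/
lemma muCont (hμcont : Continuous μ) {s : Set X} (hs : Sc s) {ε : ℝ} (hε : 0 < ε) :
    ∃ δ > 0, ∀ u : Set X, Sc u → hausdorffDist u s < δ → |muS μ u - muS μ s| < ε := by
  have := Metric.continuous_iff.mp hμcont (mk s hs) ε hε
  obtain ⟨δ, hδ, hc⟩ := this
  refine ⟨δ, hδ, fun u hu hd => ?_⟩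
  have := hc (mk u hu) (by rw [distH]; simpa using hd)
  rw [Real.dist_eq] at this
  rw [muS_eq μ hu, muS_eq μ hs]
  exact this

end Mu

/-- Grow a proper subcontinuum slightly but strictly (corollary of `bump`). -/
lemma grow {A C₀ : Set X} (hA : Sc A) (hC : Sc C₀) (hsub : C₀ ⊆ A) (hne : C₀ ≠ A)
    {η : ℝ} (hη : 0 < η) :
    ∃ C', Sc C' ∧ C₀ ⊆ C' ∧ C' ⊆ A ∧ C' ≠ C₀ ∧ ∀ y ∈ C', infDist y C₀ ≤ η := by
  obtain ⟨a, haA, haC⟩ := exists_of_ssubset (ssubset_of_subset_of_ne hsub hne)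
  have hr : 0 < infDist a C₀ := (hC.2.1.isClosed.notMem_iff_infDist_pos hC.1).mp haC
  set δ : ℝ := min η (infDist a C₀ / 2) with hδdef
  have hδ : 0 < δ := lt_min hη (by linarith)
  obtain ⟨A', hA'sc, hCA', hA'A, hbd, y, hyA', hyd⟩ := bump hA hC hsub hδ
    ⟨a, haA, lt_of_le_of_lt (min_le_right _ _) (by linarith)⟩
  refine ⟨A', hA'sc, hCA', hA'A, fun he => ?_, fun z hz => le_trans (hbd z hz) (min_le_left _ _)⟩
  rw [he] at hyA'
  rw [infDist_zero_of_mem hyA'] at hyd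
  exact absurd hyd.symm (ne_of_gt hδ)

/-- finite subsets of a chain have upper bounds in the chain -/
lemma chain_finite_ub {c : Set (Set X)} (hchain : IsChain (· ⊆ ·) c) (hcne : c.Nonempty)
    {d : Set (Set X)} (hd : d.Finite) (hdc : d ⊆ c) : ∃ C ∈ c, ∀ D ∈ d, D ⊆ C := by
  rcases d.eq_empty_or_nonempty with rfl | hdn
  · exact ⟨hcne.choose, hcne.choose_spec, by simp⟩
  obtain ⟨M, hMd, hMmax⟩ := Set.Finite.exists_maximalFor id d hd hdn
  refine ⟨M, hdc hMd, fun D hD => ?_⟩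
  rcases eq_or_ne D M with rfl | hne
  · exact Subset.rfl
  rcases hchain (hdc hD) (hdc hMd) hne with h | h
  · exact h
  · exact hMmax hD h

/-- the closure of the union of a chain of subcontinua is a subcontinuum approximated
by tails of the chain -/
lemma chainSup {c : Set (Set X)} (hchain : IsChain (· ⊆ ·) c) (hcne : c.Nonempty)
    (hsc : ∀ C ∈ c, Sc C) :
    Sc (closure (⋃₀ c)) ∧
      (∀ ε > (0:ℝ), ∃ C ∈ c, ∀ C' ∈ c, C ⊆ C' → hausdorffDist C' (closure (⋃₀ c)) ≤ ε) := by
  obtain ⟨C₀, hC₀⟩ := id hcne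
  have hUne : (⋃₀ c).Nonempty := ⟨(hsc C₀ hC₀).1.choose, C₀, hC₀, (hsc C₀ hC₀).1.choose_spec⟩
  have hpre : IsPreconnected (⋃₀ c) := by
    rintro U V hU hV hcov ⟨x, hxU₀, hxU⟩ ⟨y, hyV₀, hyV⟩
    obtain ⟨Cx, hCx, hxCx⟩ := hxU₀
    obtain ⟨Cy, hCy, hyCy⟩ := hyV₀
    have : ∃ C ∈ c, x ∈ C ∧ y ∈ C := by
      rcases eq_or_ne Cx Cy with rfl | hne
      · exact ⟨Cx, hCx, hxCx, hyCy⟩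
      rcases hchain hCx hCy hne with h | h
      · exact ⟨Cy, hCy, h hxCx, hyCy⟩
      · exact ⟨Cx, hCx, hxCx, h hyCy⟩
    obtain ⟨C, hCc, hxC, hyC⟩ := this
    have := (hsc C hCc).2.2 U V hU hV
      (subset_trans (subset_sUnion_of_mem hCc) hcov) ⟨x, hxC, hxU⟩ ⟨y, hyC, hyV⟩
    exact this.imp fun a ⟨ha, hb⟩ => ⟨subset_sUnion_of_mem hCc ha, hb⟩
  have hscU : Sc (closure (⋃₀ c)) :=
    ⟨hUne.closure, isClosed_closure.isCompact, hpre.closure⟩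
  refine ⟨hscU, fun ε hε => ?_⟩
  -- cover the closure by balls centered in the union
  have hcov : closure (⋃₀ c) ⊆ ⋃ y ∈ ⋃₀ c, ball y ε := by
    intro u hu
    obtain ⟨y, hy, hdy⟩ := Metric.mem_closure_iff.1 hu ε hε
    exact mem_iUnion₂.2 ⟨y, hy, by rwa [mem_ball]⟩
  obtain ⟨b', hb'sub, hb'fin, hb'cov⟩ := hscU.2.1.elim_finite_subcover_image
    (fun y _ => isOpen_ball) hcov
  -- for each y in b' pick a chain element containing it
  have hpick : ∀ y ∈ b', ∃ C ∈ c, y ∈ C := fun y hy => hb'sub hy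
  classical
  choose! pC hpCc hypC using hpick
  obtain ⟨Cub, hCubc, hCub⟩ := chain_finite_ub hchain hcne (hb'fin.image pC)
    (by rintro - ⟨y, hy, rfl⟩; exact hpCc y hy)
  refine ⟨Cub, hCubc, fun C' hC' hsub' => ?_⟩
  have hC'ne : C'.Nonempty := (hsc C' hC').1
  apply hausdorffDist_le_of_infDist (le_of_lt hε)
  · intro x hx
    rw [infDist_zero_of_mem (subset_closure (subset_sUnion_of_mem hC' hx))]
    exact le_of_lt hε
  · intro u hu
    obtain ⟨y, hy, hdy⟩ := mem_iUnion₂.1 (hb'cov hu)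
    have hyC' : y ∈ C' := hsub' (hCub (pC y) (mem_image_of_mem pC hy) (hypC y hy))
    calc infDist u C' ≤ dist u y := infDist_le_dist_of_mem hyC'
      _ ≤ ε := le_of_lt (by rwa [mem_ball] at hdy)

/-- extract from a chain an increasing sequence converging to the closure of the union -/
lemma chainSeq {c : Set (Set X)} (hchain : IsChain (· ⊆ ·) c) (hcne : c.Nonempty)
    (hsc : ∀ C ∈ c, Sc C) :
    ∃ Cs : ℕ → Set X, (∀ n, Cs n ∈ c) ∧ (∀ n, Cs n ⊆ Cs (n + 1)) ∧
      ∀ n : ℕ, hausdorffDist (Cs n) (closure (⋃₀ c)) ≤ 1 / (n + 1) := by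
  classical
  obtain ⟨-, hkey⟩ := chainSup hchain hcne hsc
  have hpos : ∀ n : ℕ, (0:ℝ) < 1 / (n + 1) := fun n => by positivity
  choose D hDc hDprop using fun n : ℕ => hkey (1 / (n + 1)) (hpos n)
  have hdir := hchain.directedOn
  choose u hu1 hu2 hu3 using fun (a : Set X) (ha : a ∈ c) (b : Set X) (hb : b ∈ c) =>
    hdir a ha b hb
  let h : ℕ → {s : Set X // s ∈ c} := fun n => Nat.rec ⟨D 0, hDc 0⟩
    (fun n p => ⟨u p.1 p.2 (D (n + 1)) (hDc (n + 1)), hu1 _ _ _ _⟩) n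
  have hDh : ∀ n, D n ⊆ (h n).1 := by
    intro n
    cases n with
    | zero => exact Subset.rfl
    | succ k => exact hu3 _ _ _ _
  refine ⟨fun n => (h n).1, fun n => (h n).2, fun n => hu2 _ _ _ _, fun n => ?_⟩
  exact hDprop n (h n).1 (h n).2 (hDh n)


section Core

variable {μ : Hyperspace X → ℝ} {t : ℝ}

/-- Whitney level of `B`, as a subset of the hyperspace. -/
def levelT (μ : Hyperspace X → ℝ) (t : ℝ) (B : Set X) : Set (Hyperspace X) :=
  {E | (E.1 : Set X) ⊆ B ∧ μ E = t}

/-- the part of the Whitney level of `B` above `K` -/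
def TKB (μ : Hyperspace X → ℝ) (t : ℝ) (K B : Set X) : Set (Hyperspace X) :=
  {E | K ⊆ (E.1 : Set X) ∧ (E.1 : Set X) ⊆ B ∧ μ E = t}

lemma isClosed_subset_set {B : Set X} (hB : IsClosed B) (hBne : B.Nonempty) :
    IsClosed {E : Hyperspace X | (E.1 : Set X) ⊆ B} := by
  refine IsSeqClosed.isClosed ?_
  intro En E hEn hlim
  rw [Metric.tendsto_atTop] at hlim
  intro x hx
  refine mem_of_infDist_le_zero hB hBne (le_of_forall_pos_le_add fun ε hε => ?_)
  obtain ⟨n, hn⟩ := hlim ε hε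
  have h1 : infDist x ((En n).1 : Set X) ≤ ε := by
    have := infDist_le_hd hx E.1.nonempty (En n).1.nonempty
    rw [← distH, dist_comm] at this
    exact this.trans (hn n le_rfl).le
  calc infDist x B ≤ infDist x ((En n).1 : Set X) :=
        infDist_le_infDist_of_subset (hEn n) (En n).1.nonempty
    _ ≤ 0 + ε := by linarith

lemma isClosed_supset_set {K : Set X} :
    IsClosed {E : Hyperspace X | K ⊆ (E.1 : Set X)} := by
  refine IsSeqClosed.isClosed ?_
  intro En E hEn hlim
  rw [Metric.tendsto_atTop] at hlim
  intro x hx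
  refine mem_of_infDist_le_zero E.1.isCompact.isClosed E.1.nonempty
    (le_of_forall_pos_le_add fun ε hε => ?_)
  obtain ⟨n, hn⟩ := hlim ε hε
  have h1 : infDist x ((E).1 : Set X) ≤ ε := by
    have := infDist_le_hd (hEn n hx) (En n).1.nonempty E.1.nonempty
    rw [← distH] at this
    exact this.trans (hn n le_rfl).le
  linarith

lemma isClosed_TKB (hμcont : Continuous μ) {K B : Set X} (hB : IsClosed B) (hBne : B.Nonempty) :
    IsClosed (TKB μ t K B) := by
  have : TKB μ t K B = {E : Hyperspace X | K ⊆ (E.1 : Set X)} ∩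
      ({E : Hyperspace X | (E.1 : Set X) ⊆ B} ∩ μ ⁻¹' {t}) := by
    ext E; simp [TKB, mem_setOf_eq, and_assoc]
  rw [this]
  exact isClosed_supset_set.inter ((isClosed_subset_set hB hBne).inter
    (isClosed_singleton.preimage hμcont))

lemma isClosed_levelT (hμcont : Continuous μ) {B : Set X} (hB : IsClosed B) (hBne : B.Nonempty) :
    IsClosed (levelT μ t B) := by
  have : levelT μ t B = {E : Hyperspace X | (E.1 : Set X) ⊆ B} ∩ μ ⁻¹' {t} := by
    ext E; simp [levelT, mem_setOf_eq]
  rw [this]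
  exact (isClosed_subset_set hB hBne).inter (isClosed_singleton.preimage hμcont)

/-- the union of a compact family of subcontinua is closed -/
lemma isClosed_union_family {P : Set (Hyperspace X)} (hPc : IsCompact P) :
    IsClosed {x : X | ∃ E ∈ P, x ∈ (E.1 : Set X)} := by
  refine IsSeqClosed.isClosed ?_
  intro xn x hxn hlim
  classical
  choose En hEnP hEnmem using hxn
  obtain ⟨E, hEP, φ, hφ, hconv⟩ := hPc.tendsto_subseq hEnP
  refine ⟨E, hEP, ?_⟩
  refine mem_of_infDist_le_zero E.1.isCompact.isClosed E.1.nonempty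
    (le_of_forall_pos_le_add fun ε hε => ?_)
  rw [Metric.tendsto_atTop] at hconv hlim
  obtain ⟨n1, hn1⟩ := hconv (ε/2) (by linarith)
  obtain ⟨n2, hn2⟩ := hlim (ε/2) (by linarith)
  set n := max n1 n2
  have h1 : infDist (xn (φ n)) ((E).1 : Set X) ≤ ε/2 := by
    have := infDist_le_hd (hEnmem (φ n)) (En (φ n)).1.nonempty E.1.nonempty
    rw [← distH] at this
    exact this.trans (hn1 n (le_max_left _ _)).le
  have h2 : dist x (xn (φ n)) ≤ ε/2 := by
    rw [dist_comm]
    exact (hn2 (φ n) ((le_max_right n1 n2).trans (hφ.le_apply))).le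
  calc infDist x ((E).1 : Set X) ≤ infDist (xn (φ n)) ((E).1 : Set X) + dist x (xn (φ n)) :=
        infDist_le_infDist_add_dist
    _ ≤ 0 + ε := by linarith

variable (hμcont : Continuous μ)
  (hμ0 : ∀ A : Hyperspace X, (A.1 : Set X).Subsingleton → μ A = 0)
  (hμmono : ∀ A B : Hyperspace X, (A.1 : Set X) ⊂ (B.1 : Set X) → μ A < μ B)

include hμcont hμmono in
/-- the intermediate value property: between `K` and `B` there is a subcontinuum of
μ-value exactly `t`. -/
lemma exists_level {K B : Set X} (hK : Sc K) (hB : Sc B) (hKB : K ⊆ B)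
    (hmuK : muS μ K ≤ t) (hmuB : t ≤ muS μ B) :
    ∃ E, Sc E ∧ K ⊆ E ∧ E ⊆ B ∧ muS μ E = t := by
  set S : Set (Set X) := {C | Sc C ∧ K ⊆ C ∧ C ⊆ B ∧ muS μ C ≤ t} with hS
  have hub : ∀ c ⊆ S, IsChain (· ⊆ ·) c → c.Nonempty → ∃ ub ∈ S, ∀ s ∈ c, s ⊆ ub := by
    intro c hcS hchain hcne
    obtain ⟨hscU, happrox⟩ := chainSup hchain hcne (fun C hC => (hcS hC).1)
    set U := closure (⋃₀ c) with hU
    have hCU : ∀ C ∈ c, C ⊆ U := fun C hC => (subset_sUnion_of_mem hC).trans subset_closure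
    have hKU : K ⊆ U := (hcS hcne.choose_spec).2.1.trans (hCU _ hcne.choose_spec)
    have hUB : U ⊆ B := closure_minimal (sUnion_subset fun C hC => (hcS hC).2.2.1)
      hB.2.1.isClosed
    have hmuU : muS μ U ≤ t := by
      by_contra hgt
      push_neg at hgt
      obtain ⟨δ, hδ, hc⟩ := muCont hμcont hscU (show (0:ℝ) < muS μ U - t by linarith)
      obtain ⟨C, hCc, hCprop⟩ := happrox (δ/2) (by linarith)
      have h1 := hc C ((hcS hCc).1) (lt_of_le_of_lt (hCprop C hCc Subset.rfl) (by linarith))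
      have h2 := (hcS hCc).2.2.2
      rw [abs_lt] at h1
      linarith
    exact ⟨U, ⟨hscU, hKU, hUB, hmuU⟩, hCU⟩
  obtain ⟨m, hKm, hmax⟩ := zorn_subset_nonempty S hub K ⟨hK, Subset.rfl, hKB, hmuK⟩
  obtain ⟨hmsc, hKm', hmB, hmt⟩ := hmax.prop
  rcases eq_or_lt_of_le hmt with heq | hlt
  · exact ⟨m, hmsc, hKm, hmB, heq⟩
  · exfalso
    have hmne : m ≠ B := fun h => by rw [h] at hlt; linarith
    obtain ⟨δ, hδ, hc⟩ := muCont hμcont hmsc (show (0:ℝ) < t - muS μ m by linarith)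
    obtain ⟨C', hC'sc, hmC', hC'B, hC'ne, hC'bd⟩ := grow hB hmsc hmB hmne (show (0:ℝ) < δ/2 by linarith)
    have hhd : hausdorffDist C' m < δ :=
      lt_of_le_of_lt (hd_of_pointwise hmC' hmsc.1 (by linarith) hC'bd) (by linarith)
    have h1 := hc C' hC'sc hhd
    rw [abs_lt] at h1
    have hC'S : C' ∈ S := ⟨hC'sc, hKm'.trans hmC', hC'B, by linarith⟩
    exact hC'ne (subset_antisymm (hmax.2 hC'S hmC') hmC')

include hμcont hμmono in
/-- Main lemma: no subcontinuum `K` below the level can see both parts of a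
separation of the portion of the level above `K`. -/
lemma no_bimeet {K B : Set X} (hK : Sc K) (hB : Sc B) (hKB : K ⊆ B)
    (hmuK : muS μ K ≤ t) (hmuB : t ≤ muS μ B)
    {P Q : Set (Hyperspace X)} (hPc : IsCompact P) (hQc : IsCompact Q)
    (hdisj : Disjoint P Q) (hcover : P ∪ Q = TKB μ t K B) :
    P = ∅ ∨ Q = ∅ := by
  by_contra hno
  push_neg at hno
  obtain ⟨hPne, hQne⟩ := hno
  -- members of P and Q are in the level
  have hPlev : ∀ E ∈ P, K ⊆ (E.1 : Set X) ∧ (E.1 : Set X) ⊆ B ∧ μ E = t :=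
    fun E hE => by have := hcover ▸ Set.mem_union_left Q hE; exact this
  have hQlev : ∀ E ∈ Q, K ⊆ (E.1 : Set X) ∧ (E.1 : Set X) ⊆ B ∧ μ E = t :=
    fun E hE => by have := hcover ▸ Set.mem_union_right P hE; exact this
  set S : Set (Set X) := {C | (Sc C ∧ K ⊆ C ∧ C ⊆ B ∧ muS μ C ≤ t) ∧
    (∃ E ∈ P, C ⊆ (E.1 : Set X)) ∧ (∃ E ∈ Q, C ⊆ (E.1 : Set X))} with hS
  -- K belongs to S
  have hKS : K ∈ S := by
    obtain ⟨Ep, hEp⟩ := hPne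
    obtain ⟨Eq, hEq⟩ := hQne
    exact ⟨⟨hK, Subset.rfl, hKB, hmuK⟩, ⟨Ep, hEp, (hPlev Ep hEp).1⟩, ⟨Eq, hEq, (hQlev Eq hEq).1⟩⟩
  -- chains have upper bounds in S
  have hub : ∀ c ⊆ S, IsChain (· ⊆ ·) c → c.Nonempty → ∃ ub ∈ S, ∀ s ∈ c, s ⊆ ub := by
    intro c hcS hchain hcne
    obtain ⟨hscU, happrox⟩ := chainSup hchain hcne (fun C hC => (hcS hC).1.1)
    set U := closure (⋃₀ c) with hU
    have hCU : ∀ C ∈ c, C ⊆ U := fun C hC => (subset_sUnion_of_mem hC).trans subset_closure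
    have hKU : K ⊆ U := (hcS hcne.choose_spec).1.2.1.trans (hCU _ hcne.choose_spec)
    have hUB : U ⊆ B := closure_minimal (sUnion_subset fun C hC => (hcS hC).1.2.2.1)
      hB.2.1.isClosed
    have hmuU : muS μ U ≤ t := by
      by_contra hgt
      push_neg at hgt
      obtain ⟨δ, hδ, hc⟩ := muCont hμcont hscU (show (0:ℝ) < muS μ U - t by linarith)
      obtain ⟨C, hCc, hCprop⟩ := happrox (δ/2) (by linarith)
      have h1 := hc C ((hcS hCc).1.1) (lt_of_le_of_lt (hCprop C hCc Subset.rfl) (by linarith))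
      have h2 := (hcS hCc).1.2.2.2
      rw [abs_lt] at h1
      linarith
    -- find a member of P containing U
    have hwit : ∀ (R : Set (Hyperspace X)), IsCompact R →
        (∀ C ∈ c, ∃ E ∈ R, C ⊆ (E.1 : Set X)) → ∃ E ∈ R, U ⊆ (E.1 : Set X) := by
      intro R hRc hmeets
      obtain ⟨Cs, hCsc, hCsmono, hCsd⟩ := chainSeq hchain hcne (fun C hC => (hcS hC).1.1)
      choose En hEnR hEnsub using fun n => hmeets (Cs n) (hCsc n)
      obtain ⟨E, hER, φ, hφ, hconv⟩ := hRc.tendsto_subseq hEnR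
      refine ⟨E, hER, fun u hu => ?_⟩
      refine mem_of_infDist_le_zero E.1.isCompact.isClosed E.1.nonempty
        (le_of_forall_pos_le_add fun ε hε => ?_)
      rw [Metric.tendsto_atTop] at hconv
      obtain ⟨n1, hn1⟩ := hconv (ε/3) (by linarith)
      obtain ⟨n2, hn2⟩ := exists_nat_one_div_lt (show (0:ℝ) < ε/3 by linarith)
      set n := max n1 n2
      have hCn : (Cs (φ n)).Nonempty := ((hcS (hCsc (φ n))).1.1).1
      -- u is close to Cs (φ n)
      have h1 : infDist u (Cs (φ n)) ≤ ε/3 := by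
        have := infDist_le_hd hu hscU.1 hCn
        rw [hausdorffDist_comm] at this
        refine this.trans ?_
        refine (hCsd (φ n)).trans ?_
        have hφn : (n2:ℝ) ≤ (φ n : ℝ) := by
          exact_mod_cast (le_max_right n1 n2).trans hφ.le_apply
        have := hn2
        have h3 : (1:ℝ) / (φ n + 1) ≤ 1 / (n2 + 1) := by
          apply one_div_le_one_div_of_le <;> [positivity; linarith]
        linarith
      -- Cs (φ n) ⊆ En (φ n) so infDist u (En (φ n)) ≤ ε/3
      have h2 : infDist u ((En (φ n)).1 : Set X) ≤ ε/3 :=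
        (infDist_le_infDist_of_subset (hEnsub (φ n)) hCn).trans h1
      -- En (φ n) is Hausdorff-close to E
      have h3 : infDist u ((E).1 : Set X) ≤ infDist u ((En (φ n)).1 : Set X) +
          hausdorffDist ((En (φ n)).1 : Set X) ((E).1 : Set X) :=
        infDist_le_infDist_add_hausdorffDist (hne_top (En (φ n)).1.nonempty E.1.nonempty)
      have h4 : hausdorffDist ((En (φ n)).1 : Set X) ((E).1 : Set X) ≤ ε/3 := by
        rw [← distH]
        exact (hn1 n (le_max_left _ _)).le
      linarith
    obtain ⟨Ep, hEpP, hUEp⟩ := hwit P hPc (fun C hC => (hcS hC).2.1)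
    obtain ⟨Eq, hEqQ, hUEq⟩ := hwit Q hQc (fun C hC => (hcS hC).2.2)
    exact ⟨U, ⟨⟨hscU, hKU, hUB, hmuU⟩, ⟨Ep, hEpP, hUEp⟩, ⟨Eq, hEqQ, hUEq⟩⟩, hCU⟩
  obtain ⟨C₀, hKC₀, hmax⟩ := zorn_subset_nonempty S hub K hKS
  obtain ⟨⟨hC₀sc, hKC₀', hC₀B, hC₀t⟩, ⟨A, hAP, hC₀A⟩, ⟨Bq, hBqQ, hC₀Bq⟩⟩ := hmax.prop
  have hAt : μ A = t := (hPlev A hAP).2.2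
  have hBqt : μ Bq = t := (hQlev Bq hBqQ).2.2
  have hABne : A ≠ Bq := fun h => disjoint_left.1 hdisj hAP (h ▸ hBqQ)
  -- C₀ is strictly below A and Bq
  have hC₀Ane : C₀ ≠ (A.1 : Set X) := by
    intro h
    have h1 : muS μ C₀ = t := by rw [h, muS_coe]; exact hAt
    have h2 : C₀ = (Bq.1 : Set X) := eq_of_muS hμmono hC₀sc (sc_coe Bq) hC₀Bq
      (by rw [muS_coe, hBqt, h1])
    exact hABne (hyper_ext (h ▸ h2))
  have hC₀Bqne : C₀ ≠ (Bq.1 : Set X) := by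
    intro h
    have h1 : muS μ C₀ = t := by rw [h, muS_coe]; exact hBqt
    have h2 : C₀ = (A.1 : Set X) := eq_of_muS hμmono hC₀sc (sc_coe A) hC₀A
      (by rw [muS_coe, hAt, h1])
    exact hABne (hyper_ext (h2 ▸ h))
  have hC₀lt : muS μ C₀ < t := by
    have := muS_strict hμmono hC₀sc (sc_coe A) hC₀A hC₀Ane
    rwa [muS_coe, hAt] at this
  obtain ⟨δ, hδ, hc⟩ := muCont hμcont hC₀sc (show (0:ℝ) < t - muS μ C₀ by linarith)
  obtain ⟨A', hA'sc, hCA', hA'A, hA'ne, hA'bd⟩ :=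
    grow (sc_coe A) hC₀sc hC₀A hC₀Ane (show (0:ℝ) < δ/2 by linarith)
  obtain ⟨B', hB'sc, hCB', hB'Bq, hB'ne, hB'bd⟩ :=
    grow (sc_coe Bq) hC₀sc hC₀Bq hC₀Bqne (show (0:ℝ) < δ/2 by linarith)
  have hA'lt : muS μ A' < t := by
    have h1 := hc A' hA'sc
      (lt_of_le_of_lt (hd_of_pointwise hCA' hC₀sc.1 (by linarith) hA'bd) (by linarith))
    rw [abs_lt] at h1; linarith
  have hB'lt : muS μ B' < t := by
    have h1 := hc B' hB'sc
      (lt_of_le_of_lt (hd_of_pointwise hCB' hC₀sc.1 (by linarith) hB'bd) (by linarith))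
    rw [abs_lt] at h1; linarith
  have hA'A2 : A' ⊆ B := hA'A.trans (hPlev A hAP).2.1
  have hB'B2 : B' ⊆ B := hB'Bq.trans (hQlev Bq hBqQ).2.1
  have hA'notS : A' ∉ S := fun hh => hA'ne (subset_antisymm (hmax.2 hh hCA') hCA')
  have hB'notS : B' ∉ S := fun hh => hB'ne (subset_antisymm (hmax.2 hh hCB') hCB')
  have hA'noQ : ∀ E ∈ Q, ¬ A' ⊆ (E.1 : Set X) := by
    intro E hE hsub
    exact hA'notS ⟨⟨hA'sc, hKC₀'.trans hCA', hA'A2, hA'lt.le⟩, ⟨A, hAP, hA'A⟩, ⟨E, hE, hsub⟩⟩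
  have hB'noP : ∀ E ∈ P, ¬ B' ⊆ (E.1 : Set X) := by
    intro E hE hsub
    exact hB'notS ⟨⟨hB'sc, hKC₀'.trans hCB', hB'B2, hB'lt.le⟩, ⟨E, hE, hsub⟩, ⟨Bq, hBqQ, hB'Bq⟩⟩
  -- the junction J
  obtain ⟨z, hz⟩ := hC₀sc.1
  set J : Set X := A' ∪ B' with hJ
  have hJsc : Sc J := ⟨⟨z, Or.inl (hCA' hz)⟩, hA'sc.2.1.union hB'sc.2.1,
    IsPreconnected.union z (hCA' hz) (hCB' hz) hA'sc.2.2 hB'sc.2.2⟩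
  have hJB : J ⊆ B := union_subset hA'A2 hB'B2
  have hJbd : ∀ y ∈ J, infDist y C₀ ≤ δ/2 := fun y hy => hy.elim (hA'bd y) (hB'bd y)
  have hJlt : muS μ J < t := by
    have h1 := hc J hJsc
      (lt_of_le_of_lt (hd_of_pointwise (hCA'.trans subset_union_left) hC₀sc.1
        (by linarith) hJbd) (by linarith))
    rw [abs_lt] at h1; linarith
  obtain ⟨E, hEsc, hJE, hEB, hEt⟩ := exists_level hμcont hμmono hJsc hB hJB hJlt.le hmuB
  have hEt' : μ (mk E hEsc) = t := by rw [← muS_eq μ hEsc]; exact hEt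
  have hEmem : mk E hEsc ∈ TKB μ t K B :=
    ⟨hKC₀'.trans (hCA'.trans ((subset_union_left).trans hJE)), hEB, hEt'⟩
  rw [← hcover] at hEmem
  rcases hEmem with hEP | hEQ
  · exact hB'noP _ hEP ((subset_union_right).trans hJE)
  · exact hA'noQ _ hEQ ((subset_union_left).trans hJE)

include hμcont hμmono in
lemma TKB_preconn {K B : Set X} (hK : Sc K) (hB : Sc B) (hKB : K ⊆ B)
    (hmuK : muS μ K ≤ t) (hmuB : t ≤ muS μ B) : IsPreconnected (TKB μ t K B) := by
  haveI : CompactSpace (Hyperspace X) := compactSpace_hyper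
  have hTc : IsCompact (TKB μ t K B) := (isClosed_TKB hμcont hB.2.1.isClosed hB.1).isCompact
  rintro U V hU hV hcov ⟨E1, hE1T, hE1U⟩ ⟨E2, hE2T, hE2V⟩
  by_contra hempty
  rw [Set.not_nonempty_iff_eq_empty] at hempty
  set P : Set (Hyperspace X) := TKB μ t K B \ V with hPdef
  set Q : Set (Hyperspace X) := TKB μ t K B \ U with hQdef
  have hPc : IsCompact P := hTc.diff hV
  have hQc : IsCompact Q := hTc.diff hU
  have hdisj : Disjoint P Q := by
    rw [disjoint_left]; rintro E ⟨hET, hEV⟩ ⟨-, hEU⟩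
    rcases hcov hET with h | h
    exacts [hEU h, hEV h]
  have hcover : P ∪ Q = TKB μ t K B := by
    apply subset_antisymm (union_subset diff_subset diff_subset)
    intro E hE
    by_cases h : E ∈ V
    · exact Or.inr ⟨hE, fun hU' =>
        (eq_empty_iff_forall_notMem.1 hempty E) ⟨hE, hU', h⟩⟩
    · exact Or.inl ⟨hE, h⟩
  rcases no_bimeet hμcont hμmono hK hB hKB hmuK hmuB hPc hQc hdisj hcover with h | h
  · have : E1 ∈ P := ⟨hE1T, fun hV' =>
      (eq_empty_iff_forall_notMem.1 hempty E1) ⟨hE1T, hE1U, hV'⟩⟩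
    rw [h] at this; exact this
  · have : E2 ∈ Q := ⟨hE2T, fun hU' =>
      (eq_empty_iff_forall_notMem.1 hempty E2) ⟨hE2T, hU', hE2V⟩⟩
    rw [h] at this; exact this

lemma sc_singleton (x : X) : Sc ({x} : Set X) :=
  ⟨singleton_nonempty x, isCompact_singleton, isPreconnected_singleton⟩

include hμcont hμ0 hμmono in
lemma levelT_preconn {B : Set X} (hB : Sc B) (ht0 : 0 ≤ t) (hmuB : t ≤ muS μ B) :
    IsPreconnected (levelT μ t B) := by
  haveI : CompactSpace (Hyperspace X) := compactSpace_hyper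
  have hLc : IsCompact (levelT μ t B) := (isClosed_levelT hμcont hB.2.1.isClosed hB.1).isCompact
  rintro U V hU hV hcov ⟨E1, hE1T, hE1U⟩ ⟨E2, hE2T, hE2V⟩
  by_contra hempty
  rw [Set.not_nonempty_iff_eq_empty] at hempty
  set P : Set (Hyperspace X) := levelT μ t B \ V with hPdef
  set Q : Set (Hyperspace X) := levelT μ t B \ U with hQdef
  have hPc : IsCompact P := hLc.diff hV
  have hQc : IsCompact Q := hLc.diff hU
  have hdisj : Disjoint P Q := by
    rw [disjoint_left]; rintro E ⟨hET, hEV⟩ ⟨-, hEU⟩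
    rcases hcov hET with h | h
    exacts [hEU h, hEV h]
  have hcover : P ∪ Q = levelT μ t B := by
    apply subset_antisymm (union_subset diff_subset diff_subset)
    intro E hE
    by_cases h : E ∈ V
    · exact Or.inr ⟨hE, fun hU' =>
        (eq_empty_iff_forall_notMem.1 hempty E) ⟨hE, hU', h⟩⟩
    · exact Or.inl ⟨hE, h⟩
  have hmux : ∀ x : X, muS μ ({x} : Set X) ≤ t := fun x => by
    rw [muS_eq μ (sc_singleton x), hμ0 _ (by simp)]
    exact ht0
  -- no point of B lies both under P and under Q
  have hlabel : ∀ x ∈ B, ¬((∃ E ∈ P, x ∈ (E.1 : Set X)) ∧ (∃ E ∈ Q, x ∈ (E.1 : Set X))) := by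
    rintro x hx ⟨⟨Ep, hEpP, hxEp⟩, ⟨Eq', hEqQ, hxEq⟩⟩
    have hTxclosed : IsClosed (TKB μ t ({x} : Set X) B) :=
      isClosed_TKB hμcont hB.2.1.isClosed hB.1
    have hTxsub : TKB μ t ({x} : Set X) B ⊆ levelT μ t B := fun E hE => ⟨hE.2.1, hE.2.2⟩
    have hcov2 : (P ∩ TKB μ t ({x} : Set X) B) ∪ (Q ∩ TKB μ t ({x} : Set X) B)
        = TKB μ t ({x} : Set X) B := by
      rw [← union_inter_distrib_right, hcover]
      exact inter_eq_self_of_subset_right hTxsub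
    have hnb := no_bimeet hμcont hμmono (sc_singleton x) hB (singleton_subset_iff.2 hx)
      (hmux x) hmuB (hPc.inter_right hTxclosed) (hQc.inter_right hTxclosed)
      (hdisj.mono inter_subset_left inter_subset_left) hcov2
    have hEpT : Ep ∈ P ∩ TKB μ t ({x} : Set X) B :=
      ⟨hEpP, singleton_subset_iff.2 hxEp, (hcover ▸ Set.mem_union_left Q hEpP : Ep ∈ levelT μ t B).1,
        (hcover ▸ Set.mem_union_left Q hEpP : Ep ∈ levelT μ t B).2⟩
    have hEqT : Eq' ∈ Q ∩ TKB μ t ({x} : Set X) B :=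
      ⟨hEqQ, singleton_subset_iff.2 hxEq, (hcover ▸ Set.mem_union_right P hEqQ : Eq' ∈ levelT μ t B).1,
        (hcover ▸ Set.mem_union_right P hEqQ : Eq' ∈ levelT μ t B).2⟩
    rcases hnb with h | h
    · rw [h] at hEpT; exact hEpT
    · rw [h] at hEqT; exact hEqT
  set Xp : Set X := {x : X | ∃ E ∈ P, x ∈ (E.1 : Set X)} with hXp
  set Xq : Set X := {x : X | ∃ E ∈ Q, x ∈ (E.1 : Set X)} with hXq
  have hXpc : IsClosed Xp := isClosed_union_family hPc
  have hXqc : IsClosed Xq := isClosed_union_family hQc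
  have hcovB : B ⊆ Xp ∪ Xq := by
    intro x hx
    obtain ⟨E, hEsc, hxE, hEB, hEt⟩ := exists_level hμcont hμmono (sc_singleton x) hB
      (singleton_subset_iff.2 hx) (hmux x) hmuB
    have hmem : mk E hEsc ∈ levelT μ t B := ⟨hEB, by rw [← muS_eq μ hEsc]; exact hEt⟩
    rw [← hcover] at hmem
    rcases hmem with h | h
    · exact Or.inl ⟨_, h, hxE rfl⟩
    · exact Or.inr ⟨_, h, hxE rfl⟩
  have hE1P : E1 ∈ P := ⟨hE1T, fun hV' =>
    (eq_empty_iff_forall_notMem.1 hempty E1) ⟨hE1T, hE1U, hV'⟩⟩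
  have hE2Q : E2 ∈ Q := ⟨hE2T, fun hU' =>
    (eq_empty_iff_forall_notMem.1 hempty E2) ⟨hE2T, hU', hE2V⟩⟩
  obtain ⟨y1, hy1⟩ := E1.1.nonempty
  obtain ⟨y2, hy2⟩ := E2.1.nonempty
  have hy1B : y1 ∈ B := hE1T.1 hy1
  have hy2B : y2 ∈ B := hE2T.1 hy2
  obtain ⟨x, hxB, hxXp, hxXq⟩ := (isPreconnected_closed_iff.1 hB.2.2) Xp Xq hXpc hXqc hcovB
    ⟨y1, hy1B, E1, hE1P, hy1⟩ ⟨y2, hy2B, E2, hE2Q, hy2⟩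
  exact hlabel x hxB ⟨hxXp, hxXq⟩

end Core

end WilderAux

open WilderAux

/-- Being Wilder is a Whitney property: every Whitney level of a Wilder continuum is a
Wilder continuum. -/
theorem wilder_whitney_property (X : Type*) [MetricSpace X] [CompactSpace X]
    [ConnectedSpace X] (hX : WilderSpace X)
    (μ : Hyperspace X → ℝ) (hμcont : Continuous μ)
    (hμ0 : ∀ A : Hyperspace X, (A.1 : Set X).Subsingleton → μ A = 0)
    (hμmono : ∀ A B : Hyperspace X, (A.1 : Set X) ⊂ (B.1 : Set X) → μ A < μ B)
    (t : ℝ) (ht0 : 0 < t)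
    (httop : t < μ ⟨⟨⟨Set.univ, isCompact_univ⟩, Set.univ_nonempty⟩, isConnected_univ⟩) :
    CompactSpace {A : Hyperspace X // μ A = t} ∧
      ConnectedSpace {A : Hyperspace X // μ A = t} ∧
      WilderSpace {A : Hyperspace X // μ A = t} := by
  classical
  haveI : CompactSpace (Hyperspace X) := compactSpace_hyper
  have hscU : Sc (Set.univ : Set X) := ⟨Set.univ_nonempty, isCompact_univ, isPreconnected_univ⟩
  have hmuU : t ≤ muS μ Set.univ := by
    rw [muS_eq μ hscU]
    exact le_of_lt httop
  have hmux : ∀ x : X, muS μ ({x} : Set X) ≤ t := fun x => by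
    rw [muS_eq μ (sc_singleton x), hμ0 _ (by simp)]
    exact ht0.le
  have hLeq : {A : Hyperspace X | μ A = t} = levelT μ t Set.univ := by
    ext E; simp [levelT]
  have hLc : IsCompact {A : Hyperspace X | μ A = t} := by
    rw [hLeq]
    exact (isClosed_levelT hμcont isClosed_univ Set.univ_nonempty).isCompact
  have hLne : {A : Hyperspace X | μ A = t}.Nonempty := by
    obtain ⟨x⟩ := (inferInstance : Nonempty X)
    obtain ⟨E, hEsc, -, -, hEt⟩ := exists_level hμcont hμmono (sc_singleton x) hscU
      (Set.subset_univ _) (hmux x) hmuU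
    exact ⟨mk E hEsc, by rw [Set.mem_setOf_eq, ← muS_eq μ hEsc]; exact hEt⟩
  have hLpre : IsPreconnected {A : Hyperspace X | μ A = t} := by
    rw [hLeq]
    exact levelT_preconn hμcont hμ0 hμmono hscU ht0.le hmuU
  refine ⟨isCompact_iff_compactSpace.mp hLc, isConnected_iff_connectedSpace.mp ⟨hLne, hLpre⟩, ?_⟩
  -- the Wilder property of the level
  intro 𝒜 ℬ 𝒞 hAB hBC hAC
  have hmu : ∀ Pe : {A : Hyperspace X // μ A = t}, muS μ (Pe.1.1 : Set X) = t := fun Pe => by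
    rw [muS_coe]; exact Pe.2
  have hnsub : ∀ Pe Qe : {A : Hyperspace X // μ A = t}, Pe ≠ Qe →
      ¬((Pe.1.1 : Set X) ⊆ (Qe.1.1 : Set X)) := by
    intro Pe Qe hne hsub
    exact hne (Subtype.ext (hyper_ext (eq_of_muS hμmono (sc_coe Pe.1) (sc_coe Qe.1) hsub
      (by rw [hmu, hmu]))))
  -- transfer continua from the hyperspace into the level subtype
  have transfer : ∀ D : Set (Hyperspace X), D ⊆ {A : Hyperspace X | μ A = t} → IsCompact D →
      IsPreconnected D → D.Nonempty →
      IsCompact (Subtype.val ⁻¹' D : Set {A : Hyperspace X // μ A = t}) ∧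
      IsConnected (Subtype.val ⁻¹' D : Set {A : Hyperspace X // μ A = t}) := by
    intro D hDL hDc hDpre hDne
    have himg : ((Subtype.val : {A : Hyperspace X // μ A = t} → Hyperspace X) ''
        (Subtype.val ⁻¹' D)) = D := by
      apply Set.Subset.antisymm
      · rintro x ⟨v, hv, rfl⟩; exact hv
      · intro x hx; exact ⟨⟨x, hDL hx⟩, hx, rfl⟩
    refine ⟨?_, ?_, ?_⟩
    · rw [Topology.IsEmbedding.subtypeVal.isCompact_iff]
      show IsCompact ((Subtype.val : {A : Hyperspace X // μ A = t} → Hyperspace X) ''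
        (Subtype.val ⁻¹' D))
      rw [himg]; exact hDc
    · obtain ⟨E, hE⟩ := hDne
      exact ⟨⟨E, hDL hE⟩, hE⟩
    · rw [← (⟨rfl⟩ : Topology.IsInducing (Subtype.val : {A : Hyperspace X // μ A = t} → Hyperspace X)).isPreconnected_image]
      show IsPreconnected ((Subtype.val : {A : Hyperspace X // μ A = t} → Hyperspace X) ''
        (Subtype.val ⁻¹' D))
      rw [himg]; exact hDpre
  have hCB' : ¬((𝒞.1.1 : Set X) ⊆ (ℬ.1.1 : Set X)) := hnsub 𝒞 ℬ (Ne.symm hBC)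
  have hBC' : ¬((ℬ.1.1 : Set X) ⊆ (𝒞.1.1 : Set X)) := hnsub ℬ 𝒞 hBC
  by_cases h1 : (𝒞.1.1 : Set X) ⊆ (𝒜.1.1 : Set X) ∪ (ℬ.1.1 : Set X)
  · -- then some c ∈ C \ B lies in A ; use all level elements through c
    obtain ⟨c, hcC, hcB⟩ := Set.not_subset.1 hCB'
    have hcA : c ∈ (𝒜.1.1 : Set X) := (h1 hcC).resolve_right hcB
    set D : Set (Hyperspace X) := TKB μ t ({c} : Set X) Set.univ with hD
    have hDpre : IsPreconnected D := TKB_preconn hμcont hμmono (sc_singleton c) hscU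
      (Set.subset_univ _) (hmux c) hmuU
    have hDc : IsCompact D := (isClosed_TKB hμcont isClosed_univ Set.univ_nonempty).isCompact
    have hDL : D ⊆ {A : Hyperspace X | μ A = t} := fun E hE => hE.2.2
    have hAD : 𝒜.1 ∈ D := ⟨Set.singleton_subset_iff.2 hcA, Set.subset_univ _, 𝒜.2⟩
    have hCD : 𝒞.1 ∈ D := ⟨Set.singleton_subset_iff.2 hcC, Set.subset_univ _, 𝒞.2⟩
    have hBD : ℬ.1 ∉ D := fun h => hcB (h.1 rfl)
    obtain ⟨hc1, hc2⟩ := transfer D hDL hDc hDpre ⟨_, hAD⟩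
    exact ⟨_, hc1, hc2, hAD, Or.inr ⟨hCD, hBD⟩⟩
  by_cases h2 : (ℬ.1.1 : Set X) ⊆ (𝒜.1.1 : Set X) ∪ (𝒞.1.1 : Set X)
  · obtain ⟨b, hbB, hbC⟩ := Set.not_subset.1 hBC'
    have hbA : b ∈ (𝒜.1.1 : Set X) := (h2 hbB).resolve_right hbC
    set D : Set (Hyperspace X) := TKB μ t ({b} : Set X) Set.univ with hD
    have hDpre : IsPreconnected D := TKB_preconn hμcont hμmono (sc_singleton b) hscU
      (Set.subset_univ _) (hmux b) hmuU
    have hDc : IsCompact D := (isClosed_TKB hμcont isClosed_univ Set.univ_nonempty).isCompact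
    have hDL : D ⊆ {A : Hyperspace X | μ A = t} := fun E hE => hE.2.2
    have hAD : 𝒜.1 ∈ D := ⟨Set.singleton_subset_iff.2 hbA, Set.subset_univ _, 𝒜.2⟩
    have hBD : ℬ.1 ∈ D := ⟨Set.singleton_subset_iff.2 hbB, Set.subset_univ _, ℬ.2⟩
    have hCD : 𝒞.1 ∉ D := fun h => hbC (h.1 rfl)
    obtain ⟨hc1, hc2⟩ := transfer D hDL hDc hDpre ⟨_, hAD⟩
    exact ⟨_, hc1, hc2, hAD, Or.inl ⟨hBD, hCD⟩⟩
  -- generic case : use the Wilder property of X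
  obtain ⟨b, hbB, hbAC⟩ := Set.not_subset.1 h2
  obtain ⟨c, hcC, hcAB⟩ := Set.not_subset.1 h1
  have hbA : b ∉ (𝒜.1.1 : Set X) := fun h => hbAC (Or.inl h)
  have hbC : b ∉ (𝒞.1.1 : Set X) := fun h => hbAC (Or.inr h)
  have hcA : c ∉ (𝒜.1.1 : Set X) := fun h => hcAB (Or.inl h)
  have hcB : c ∉ (ℬ.1.1 : Set X) := fun h => hcAB (Or.inr h)
  obtain ⟨a, haA⟩ := 𝒜.1.1.nonempty
  have hab : a ≠ b := fun h => hbA (h ▸ haA)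
  have hbc : b ≠ c := fun h => hcB (h ▸ hbB)
  have hac : a ≠ c := fun h => hcA (h ▸ haA)
  obtain ⟨Dx, hDxc, hDxconn, haDx, hxor⟩ := hX a b c hab hbc hac
  rcases hxor with ⟨hbD, hcD⟩ | ⟨hcD, hbD⟩
  · -- b ∈ Dx, c ∉ Dx : level of A ∪ Dx ∪ B
    set B' : Set X := ((𝒜.1.1 : Set X) ∪ Dx) ∪ (ℬ.1.1 : Set X) with hB'
    have hB'sc : Sc B' := ⟨⟨a, Or.inl (Or.inl haA)⟩,
      (𝒜.1.1.isCompact.union hDxc).union ℬ.1.1.isCompact,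
      IsPreconnected.union b (Or.inr hbD) hbB
        (IsPreconnected.union a haA haDx (sc_coe 𝒜.1).2.2 hDxconn.isPreconnected)
        (sc_coe ℬ.1).2.2⟩
    have hsubA : (𝒜.1.1 : Set X) ⊆ B' := fun x hx => Or.inl (Or.inl hx)
    have hmuB' : t ≤ muS μ B' :=
      le_trans (le_of_eq (hmu 𝒜).symm) (muS_mono hμmono (sc_coe 𝒜.1) hB'sc hsubA)
    set D : Set (Hyperspace X) := levelT μ t B' with hD
    have hDpre : IsPreconnected D := levelT_preconn hμcont hμ0 hμmono hB'sc ht0.le hmuB'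
    have hDc : IsCompact D := (isClosed_levelT hμcont hB'sc.2.1.isClosed hB'sc.1).isCompact
    have hDL : D ⊆ {A : Hyperspace X | μ A = t} := fun E hE => hE.2
    have hAD : 𝒜.1 ∈ D := ⟨hsubA, 𝒜.2⟩
    have hBD : ℬ.1 ∈ D := ⟨fun x hx => Or.inr hx, ℬ.2⟩
    have hCD : 𝒞.1 ∉ D := by
      rintro ⟨hsub, -⟩
      rcases hsub hcC with (h | h) | h
      exacts [hcA h, hcD h, hcB h]
    obtain ⟨hc1, hc2⟩ := transfer D hDL hDc hDpre ⟨_, hAD⟩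
    exact ⟨_, hc1, hc2, hAD, Or.inl ⟨hBD, hCD⟩⟩
  · -- c ∈ Dx, b ∉ Dx : level of A ∪ Dx ∪ C
    set B' : Set X := ((𝒜.1.1 : Set X) ∪ Dx) ∪ (𝒞.1.1 : Set X) with hB'
    have hB'sc : Sc B' := ⟨⟨a, Or.inl (Or.inl haA)⟩,
      (𝒜.1.1.isCompact.union hDxc).union 𝒞.1.1.isCompact,
      IsPreconnected.union c (Or.inr hcD) hcC
        (IsPreconnected.union a haA haDx (sc_coe 𝒜.1).2.2 hDxconn.isPreconnected)
        (sc_coe 𝒞.1).2.2⟩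
    have hsubA : (𝒜.1.1 : Set X) ⊆ B' := fun x hx => Or.inl (Or.inl hx)
    have hmuB' : t ≤ muS μ B' :=
      le_trans (le_of_eq (hmu 𝒜).symm) (muS_mono hμmono (sc_coe 𝒜.1) hB'sc hsubA)
    set D : Set (Hyperspace X) := levelT μ t B' with hD
    have hDpre : IsPreconnected D := levelT_preconn hμcont hμ0 hμmono hB'sc ht0.le hmuB'
    have hDc : IsCompact D := (isClosed_levelT hμcont hB'sc.2.1.isClosed hB'sc.1).isCompact
    have hDL : D ⊆ {A : Hyperspace X | μ A = t} := fun E hE => hE.2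
    have hAD : 𝒜.1 ∈ D := ⟨hsubA, 𝒜.2⟩
    have hCD : 𝒞.1 ∈ D := ⟨fun x hx => Or.inr hx, 𝒞.2⟩
    have hBD : ℬ.1 ∉ D := by
      rintro ⟨hsub, -⟩
      rcases hsub hbB with (h | h) | h
      exacts [hbA h, hbD h, hbC h]
    obtain ⟨hc1, hc2⟩ := transfer D hDL hDc hDpre ⟨_, hAD⟩
    exact ⟨_, hc1, hc2, hAD, Or.inr ⟨hCD, hBD⟩⟩
end
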